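/- arXiv:1507.03191 — 8 statements merged into one kernel-verified Lean document; each statement's English description precedes it below -/
import Mathlib

section
/- For n ≥ 2 and pairwise distinct nonzero real numbers a_1,...,a_n with a_i a_j ≠ 1 for all i ≠ j, one has ∑_{i=1}^n a_i^{n-2} / ∏_{j≠i} ((a_i − a_j)(1 − a_i a_j)) = 0. -/
open Finset Polynomial

lemma sum_inv_prod_sub {F : Type*} [Field F] (n : ℕ) (hn : 2 ≤ n) (b : Fin n → F)
    (hb : Function.Injective b) :
    ∑ i, (∏ j ∈ univ.erase i, (b i - b j))⁻¹ = 0 := by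
  have hne : (univ : Finset (Fin n)).Nonempty := ⟨⟨0, by omega⟩, mem_univ _⟩
  have h := Lagrange.sum_basis (s := univ) (v := b) hb.injOn hne
  have h2 := congrArg (fun p => Polynomial.coeff p (n - 1)) h
  simp only [finset_sum_coeff] at h2
  rw [Polynomial.coeff_one] at h2
  rw [if_neg (by omega)] at h2
  rw [← h2]
  apply Finset.sum_congr rfl
  intro i _
  have hdeg : (Lagrange.basis univ b i).degree = ((univ.card - 1 : ℕ) : WithBot ℕ) :=
    Lagrange.degree_basis hb.injOn (mem_univ i)
  have hcard : (univ : Finset (Fin n)).card = n := by simp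
  have hnd : (Lagrange.basis univ b i).natDegree = n - 1 := by
    rw [natDegree_eq_of_degree_eq_some]
    rw [hdeg, hcard]
  have hc : (Lagrange.basis univ b i).coeff (n - 1) = (Lagrange.basis univ b i).leadingCoeff := by
    rw [Polynomial.leadingCoeff, hnd]
  rw [hc, Lagrange.basis, Polynomial.leadingCoeff_prod]
  rw [← Finset.prod_inv_distrib]
  apply Finset.prod_congr rfl
  intro j hj
  have hbij : b i ≠ b j := fun hh => (mem_erase.mp hj).1 (hb hh).symm
  rw [Lagrange.basisDivisor, leadingCoeff_mul, leadingCoeff_C, leadingCoeff_X_sub_C, mul_one]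

theorem sum_pow_div_prod_eq_zero (n : ℕ) (hn : 2 ≤ n) (a : Fin n → ℝ)
    (ha : Function.Injective a) (ha0 : ∀ i, a i ≠ 0)
    (hab : ∀ i j, i ≠ j → a i * a j ≠ 1) :
    ∑ i, a i ^ (n - 2) / ∏ j ∈ univ.erase i, ((a i - a j) * (1 - a i * a j)) = 0 := by
  set b : Fin n → ℝ := fun i => a i + (a i)⁻¹ with hbdef
  have hb : Function.Injective b := by
    intro i j hij
    by_contra hne
    have h1 : a i ≠ a j := fun h => hne (ha h)
    have h2 : a i * a j ≠ 1 := hab i j (fun h => hne (by rw [h]))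
    have : (a i - a j) * (a i * a j - 1) = 0 := by
      have hi0 := ha0 i; have hj0 := ha0 j
      have : a i + (a i)⁻¹ = a j + (a j)⁻¹ := hij
      field_simp at this
      nlinarith [this]
    rcases mul_eq_zero.mp this with h | h
    · exact h1 (by linarith)
    · exact h2 (by linarith)
  have hA : (∏ j, a j) ≠ 0 := Finset.prod_ne_zero_iff.mpr (fun j _ => ha0 j)
  have hP : ∀ i, (∏ j ∈ univ.erase i, ((a i - a j) * (1 - a i * a j))) ≠ 0 := by
    intro i
    apply Finset.prod_ne_zero_iff.mpr
    intro j hj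
    have hji : j ≠ i := (mem_erase.mp hj).1
    exact mul_ne_zero (sub_ne_zero.mpr (fun h => hji (ha h.symm)))
      (fun h => hab i j hji.symm (by linarith [sub_eq_zero.mp h]))
  have hprod : ∀ i, ∏ j ∈ univ.erase i, (b i - b j)
      = (-1 : ℝ) ^ (n - 1) * (∏ j ∈ univ.erase i, ((a i - a j) * (1 - a i * a j)))
        * (a i ^ (n - 2) * ∏ j, a j)⁻¹ := by
    intro i
    have hcard : (univ.erase i).card = n - 1 := by
      rw [card_erase_of_mem (mem_univ i)]; simp
    have step1 : ∏ j ∈ univ.erase i, (b i - b j)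
        = ∏ j ∈ univ.erase i, (-((a i - a j) * (1 - a i * a j)) * (a i * a j)⁻¹) := by
      apply Finset.prod_congr rfl
      intro j hj
      have hi0 := ha0 i; have hj0 := ha0 j
      simp only [hbdef]
      field_simp
      ring
    rw [step1, Finset.prod_mul_distrib, Finset.prod_inv_distrib]
    have step2 : ∏ j ∈ univ.erase i, (-((a i - a j) * (1 - a i * a j)))
        = (-1 : ℝ) ^ (n - 1) * ∏ j ∈ univ.erase i, ((a i - a j) * (1 - a i * a j)) := by
      simp only [neg_eq_neg_one_mul ((_-_)*_)]
      rw [Finset.prod_mul_distrib, Finset.prod_const, hcard]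
    have step3 : ∏ j ∈ univ.erase i, (a i * a j)
        = a i ^ (n - 2) * ∏ j, a j := by
      rw [Finset.prod_mul_distrib, Finset.prod_const, hcard,
        ← Finset.mul_prod_erase univ a (mem_univ i)]
      have : n - 1 = (n - 2) + 1 := by omega
      rw [this, pow_succ]
      ring
    rw [step2, step3]
  have key := sum_inv_prod_sub n hn b hb
  have trans : ∀ i ∈ univ, a i ^ (n - 2) / ∏ j ∈ univ.erase i, ((a i - a j) * (1 - a i * a j))
      = ((-1 : ℝ) ^ (n - 1) * (∏ j, a j)⁻¹) * (∏ j ∈ univ.erase i, (b i - b j))⁻¹ := by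
    intro i _
    rw [hprod i]
    have hsq : ((-1 : ℝ) ^ (n - 1)) * ((-1 : ℝ) ^ (n - 1)) = 1 := by
      rw [← pow_add, ← two_mul, pow_mul]; norm_num
    have hPi := hP i
    have hai := ha0 i
    rw [mul_inv, inv_inv, mul_inv]
    field_simp
  rw [Finset.sum_congr rfl trans, ← Finset.mul_sum, key, mul_zero]
end

section
/- For |a| < 1 and every nonnegative integer k, (2/π) ∫_{-1}^{1} √(1−x²) U_k(x) / ((1+a²) − 2ax) dx = a^k. -/
open Real intervalIntegral Set Filter Topology

namespace CUK


lemma D_pos {a : ℝ} (ha : |a| < 1) {c : ℝ} (hc : |c| ≤ 1) :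
    0 < 1 + a ^ 2 - 2 * a * c := by
  obtain ⟨h1, h2⟩ := abs_lt.mp ha
  obtain ⟨h3, h4⟩ := abs_le.mp hc
  have h5 : 2 * a * c ≤ 2 * |a| := by
    calc 2 * a * c ≤ |2 * a * c| := le_abs_self _
    _ = 2 * |a| * |c| := by rw [abs_mul, abs_mul]; norm_num
    _ ≤ 2 * |a| * 1 := by
        apply mul_le_mul_of_nonneg_left hc (by positivity)
    _ = 2 * |a| := by ring
  nlinarith [sq_nonneg (1 - |a|), sq_abs a]

lemma cont_integrand {a : ℝ} (ha : |a| < 1) (m : ℕ) :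
    Continuous (fun θ : ℝ => Real.sin θ * Real.sin ((m + 1) * θ) /
      (1 + a ^ 2 - 2 * a * Real.cos θ)) := by
  apply Continuous.div (by continuity) (by continuity)
  intro θ
  exact ne_of_gt (D_pos ha (abs_cos_le_one θ))

lemma int_cos_nat (m : ℕ) (hm : m ≠ 0) :
    ∫ θ in (0:ℝ)..π, Real.cos (m * θ) = 0 := by
  have hm' : (m : ℝ) ≠ 0 := Nat.cast_ne_zero.mpr hm
  have := intervalIntegral.integral_comp_mul_left (fun x => Real.cos x) (a := (0:ℝ)) (b := π) hm'
  simp only [integral_cos, mul_zero] at this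
  rw [this]
  simp [Real.sin_nat_mul_pi]

lemma sinsin (m : ℕ) :
    ∫ θ in (0:ℝ)..π, Real.sin θ * Real.sin ((m + 1) * θ) =
      if m = 0 then π / 2 else 0 := by
  rcases Nat.eq_zero_or_pos m with rfl | hm
  · simp only [if_pos rfl]
    have h : ∀ θ : ℝ, Real.sin θ * Real.sin (((0:ℕ) + 1) * θ) = Real.sin θ ^ 2 := by
      intro θ; norm_num [sq]
    simp only [h]
    rw [integral_sin_sq]
    simp
  · rw [if_neg hm.ne']
    have key : ∀ θ : ℝ, Real.sin θ * Real.sin ((m + 1) * θ) =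
        (Real.cos (m * θ) - Real.cos ((m + 2) * θ)) / 2 := by
      intro θ
      have := Real.cos_sub_cos ((m : ℝ) * θ) ((m + 2) * θ)
      have h1 : ((m : ℝ) * θ + (m + 2) * θ) / 2 = (m + 1) * θ := by ring
      have h2 : ((m : ℝ) * θ - (m + 2) * θ) / 2 = -θ := by ring
      rw [h1, h2, Real.sin_neg] at this
      linarith [this]
    simp only [key]
    rw [intervalIntegral.integral_div]
    have e1 : ∫ θ in (0:ℝ)..π, (Real.cos (m * θ) - Real.cos ((m + 2) * θ)) =
        (∫ θ in (0:ℝ)..π, Real.cos (m * θ)) - ∫ θ in (0:ℝ)..π, Real.cos ((m + 2) * θ) := by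
      apply intervalIntegral.integral_sub <;>
        exact (Continuous.intervalIntegrable (by continuity) _ _)
    have e2 := int_cos_nat m hm.ne'
    have e3 := int_cos_nat (m + 2) (by omega)
    push_cast at e3
    rw [e1, e2, e3]
    norm_num

noncomputable def F (a θ : ℝ) : ℝ :=
  Real.sin θ / (2 * a) + (1 + a ^ 2) * θ / (4 * a ^ 2) -
    (1 - a ^ 2) / (2 * a ^ 2) * Real.arctan ((1 + a) / (1 - a) * Real.tan (θ / 2))

lemma F_hasDeriv {a : ℝ} (ha : |a| < 1) (ha0 : a ≠ 0) {θ : ℝ}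
    (hθ : Real.cos (θ / 2) ≠ 0) :
    HasDerivAt (F a) (Real.sin θ ^ 2 / (1 + a ^ 2 - 2 * a * Real.cos θ)) θ := by
  obtain ⟨hm1, h1⟩ := abs_lt.mp ha
  have h1a : (1 : ℝ) - a ≠ 0 := by linarith
  set c : ℝ := (1 + a) / (1 - a) with hc
  set s : ℝ := Real.sin (θ / 2)
  set co : ℝ := Real.cos (θ / 2)
  have hs2 : s ^ 2 = 1 - co ^ 2 := Real.sin_sq _
  have hcosθ : Real.cos θ = 2 * co ^ 2 - 1 := by
    have := Real.cos_two_mul (θ / 2)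
    rw [show 2 * (θ / 2) = θ by ring] at this
    exact this
  have hsinθ : Real.sin θ = 2 * s * co := by
    have := Real.sin_two_mul (θ / 2)
    rw [show 2 * (θ / 2) = θ by ring] at this
    rw [this]
  have hD : 0 < 1 + a ^ 2 - 2 * a * Real.cos θ := D_pos ha (Real.abs_cos_le_one θ)
  -- tan
  have htan : Real.tan (θ / 2) = s / co := Real.tan_eq_sin_div_cos _
  have hhalf : HasDerivAt (fun θ : ℝ => θ / 2) (1 / 2) θ := by
    simpa using (hasDerivAt_id θ).div_const 2
  have ht : HasDerivAt (fun θ : ℝ => Real.tan (θ / 2)) (1 / co ^ 2 * (1 / 2)) θ :=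
    by have := (Real.hasDerivAt_tan (x := θ / 2) hθ).comp θ hhalf; exact this
  have hat : HasDerivAt (fun θ : ℝ => Real.arctan (c * Real.tan (θ / 2)))
      (1 / (1 + (c * Real.tan (θ / 2)) ^ 2) * (c * (1 / co ^ 2 * (1 / 2)))) θ :=
    (Real.hasDerivAt_arctan _).comp θ (ht.const_mul c)
  have hsum : HasDerivAt (F a)
      (Real.cos θ / (2 * a) + (1 + a ^ 2) * 1 / (4 * a ^ 2) -
        (1 - a ^ 2) / (2 * a ^ 2) *
          (1 / (1 + (c * Real.tan (θ / 2)) ^ 2) * (c * (1 / co ^ 2 * (1 / 2))))) θ := by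
    exact (((Real.hasDerivAt_sin θ).div_const (2 * a)).add
      (((hasDerivAt_id θ).const_mul (1 + a ^ 2)).div_const (4 * a ^ 2))).sub
      (hat.const_mul ((1 - a ^ 2) / (2 * a ^ 2)))
  convert hsum using 1
  -- show the derivative formula equals sin^2/D
  have harct : 1 / (1 + (c * Real.tan (θ / 2)) ^ 2) * (c * (1 / co ^ 2 * (1 / 2))) =
      (1 - a ^ 2) / (2 * (1 + a ^ 2 - 2 * a * Real.cos θ)) := by
    have hDrw : 1 + a ^ 2 - 2 * a * Real.cos θ =
        (1 - a) ^ 2 * co ^ 2 + (1 + a) ^ 2 * s ^ 2 := by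
      rw [hcosθ, hs2]; ring
    have hkey : 1 + (c * Real.tan (θ / 2)) ^ 2 =
        (1 + a ^ 2 - 2 * a * Real.cos θ) / ((1 - a) ^ 2 * co ^ 2) := by
      rw [htan, hc, hDrw]
      field_simp
    rw [hkey, hc]
    field_simp
    ring
  rw [harct]
  have hsin2 : Real.sin θ ^ 2 = 1 - Real.cos θ ^ 2 := Real.sin_sq θ
  rw [hsin2]
  have hDne : 1 + a ^ 2 - Real.cos θ * a * 2 ≠ 0 := by linarith
  field_simp
  ring

lemma S0 {a : ℝ} (ha : |a| < 1) (ha0 : a ≠ 0) :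
    ∫ θ in (0:ℝ)..π, Real.sin θ ^ 2 / (1 + a ^ 2 - 2 * a * Real.cos θ) = π / 2 := by
  obtain ⟨hm1, h1⟩ := abs_lt.mp ha
  set f : ℝ → ℝ := fun θ => Real.sin θ ^ 2 / (1 + a ^ 2 - 2 * a * Real.cos θ) with hf
  have hfc : Continuous f := by
    apply Continuous.div (by continuity) (by continuity)
    intro θ; exact ne_of_gt (D_pos ha (Real.abs_cos_le_one θ))
  -- primitive continuity
  have hG : Continuous (fun b => ∫ θ in (0:ℝ)..b, f θ) :=
    intervalIntegral.continuous_primitive (fun a b => (hfc.intervalIntegrable a b)) 0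
  have hne : (𝓝[<] π).NeBot := nhdsLT_neBot π
  have hGt : Tendsto (fun b => ∫ θ in (0:ℝ)..b, f θ) (𝓝[<] π)
      (𝓝 (∫ θ in (0:ℝ)..π, f θ)) :=
    (hG.tendsto π).mono_left nhdsWithin_le_nhds
  -- FTC on [0, b] for b < π
  have hFTC : ∀ᶠ b in 𝓝[<] π, (∫ θ in (0:ℝ)..b, f θ) = F a b - F a 0 := by
    filter_upwards [eventually_mem_nhdsWithin,
      eventually_nhdsWithin_of_eventually_nhds (eventually_gt_nhds Real.pi_pos)] with b hb hb0
    simp only [mem_Iio] at hb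
    apply intervalIntegral.integral_eq_sub_of_hasDerivAt
    · intro θ hθ
      rw [uIcc_of_le hb0.le] at hθ
      have hcos : Real.cos (θ / 2) ≠ 0 := by
        apply ne_of_gt
        apply Real.cos_pos_of_mem_Ioo
        constructor <;> [linarith [hθ.1, Real.pi_pos]; linarith [hθ.2, hb]]
      exact F_hasDeriv ha ha0 hcos
    · exact hfc.intervalIntegrable _ _
  -- limit of F a b
  have hF0 : F a 0 = 0 := by simp [F]
  have harctan_lim : Tendsto (fun b : ℝ => Real.arctan ((1 + a) / (1 - a) * Real.tan (b / 2)))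
      (𝓝[<] π) (𝓝 (π / 2)) := by
    have h2 : Tendsto (fun b : ℝ => b / 2) (𝓝[<] π) (𝓝[<] (π / 2)) := by
      apply tendsto_nhdsWithin_of_tendsto_nhds_of_eventually_within
      · exact (tendsto_id.div_const 2).mono_left nhdsWithin_le_nhds
      · filter_upwards [eventually_mem_nhdsWithin] with b hb
        simp only [mem_Iio] at hb ⊢
        linarith
    have htan : Tendsto (fun b : ℝ => Real.tan (b / 2)) (𝓝[<] π) atTop :=
      Real.tendsto_tan_pi_div_two.comp h2
    have hcpos : 0 < (1 + a) / (1 - a) := by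
      apply div_pos <;> linarith
    have := (htan.const_mul_atTop hcpos)
    exact (Real.tendsto_arctan_atTop.mono_right nhdsWithin_le_nhds).comp this
  have hFt : Tendsto (fun b => F a b - F a 0) (𝓝[<] π) (𝓝 (π / 2)) := by
    rw [hF0]
    simp only [sub_zero]
    have hs : Tendsto (fun b : ℝ => Real.sin b / (2 * a)) (𝓝[<] π) (𝓝 (Real.sin π / (2 * a))) :=
      ((Real.continuous_sin.tendsto π).mono_left nhdsWithin_le_nhds).div_const _
    have hl : Tendsto (fun b : ℝ => (1 + a ^ 2) * b / (4 * a ^ 2)) (𝓝[<] π)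
        (𝓝 ((1 + a ^ 2) * π / (4 * a ^ 2))) :=
      ((tendsto_id.const_mul (1 + a ^ 2)).mono_left nhdsWithin_le_nhds).div_const _
    have := (hs.add hl).sub (harctan_lim.const_mul ((1 - a ^ 2) / (2 * a ^ 2)))
    convert this using 2
    · rfl
    · rw [Real.sin_pi]
      field_simp
      ring
  have := tendsto_nhds_unique (hGt.congr' hFTC) hFt
  rw [← this]

noncomputable def T (a : ℝ) (m : ℕ) : ℝ :=
  ∫ θ in (0:ℝ)..π, Real.sin θ * Real.sin (m * θ) / (1 + a ^ 2 - 2 * a * Real.cos θ)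

lemma cont_num (c : ℝ) : Continuous (fun θ : ℝ => Real.sin θ * Real.sin (c * θ)) := by
  continuity

lemma cont_frac {a : ℝ} (ha : |a| < 1) (c : ℝ) :
    Continuous (fun θ : ℝ => Real.sin θ * Real.sin (c * θ) /
      (1 + a ^ 2 - 2 * a * Real.cos θ)) := by
  apply Continuous.div (cont_num c) (by continuity)
  intro θ; exact ne_of_gt (D_pos ha (Real.abs_cos_le_one θ))

lemma T_rec {a : ℝ} (ha : |a| < 1) (ha0 : a ≠ 0) (m : ℕ) :
    T a (m + 2) = (1 + a ^ 2) / a * T a (m + 1) -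
      (1 / a) * (if m = 0 then π / 2 else 0) - T a m := by
  have hD : ∀ θ : ℝ, 1 + a ^ 2 - 2 * a * Real.cos θ ≠ 0 :=
    fun θ => ne_of_gt (D_pos ha (Real.abs_cos_le_one θ))
  have hpt : ∀ θ : ℝ, Real.sin θ * Real.sin (((m : ℝ) + 2) * θ) /
        (1 + a ^ 2 - 2 * a * Real.cos θ) =
      (1 + a ^ 2) / a * (Real.sin θ * Real.sin (((m : ℝ) + 1) * θ) /
        (1 + a ^ 2 - 2 * a * Real.cos θ)) -
      (1 / a) * (Real.sin θ * Real.sin (((m : ℝ) + 1) * θ)) -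
      Real.sin θ * Real.sin ((m : ℝ) * θ) / (1 + a ^ 2 - 2 * a * Real.cos θ) := by
    intro θ
    have h3 : Real.sin (((m : ℝ) + 2) * θ) =
        2 * Real.cos θ * Real.sin (((m : ℝ) + 1) * θ) - Real.sin ((m : ℝ) * θ) := by
      have e1 := Real.sin_add (((m : ℝ) + 1) * θ) θ
      have e2 := Real.sin_sub (((m : ℝ) + 1) * θ) θ
      have c1 : ((m : ℝ) + 1) * θ + θ = ((m : ℝ) + 2) * θ := by ring
      have c2 : ((m : ℝ) + 1) * θ - θ = (m : ℝ) * θ := by ring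
      rw [c1] at e1; rw [c2] at e2
      linarith
    set d : ℝ := 1 + a ^ 2 - 2 * a * Real.cos θ with hd
    have hdne : d ≠ 0 := hD θ
    have hcos : Real.cos θ = (1 + a ^ 2 - d) / (2 * a) := by
      rw [hd]; field_simp; ring
    rw [h3, hcos]
    field_simp
  have hTcast : ∀ j : ℕ, T a j = ∫ θ in (0:ℝ)..π,
      Real.sin θ * Real.sin ((j : ℝ) * θ) / (1 + a ^ 2 - 2 * a * Real.cos θ) := fun j => rfl
  rw [hTcast, hTcast, hTcast]
  push_cast
  rw [intervalIntegral.integral_congr (g := fun θ =>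
      (1 + a ^ 2) / a * (Real.sin θ * Real.sin (((m : ℝ) + 1) * θ) /
        (1 + a ^ 2 - 2 * a * Real.cos θ)) -
      (1 / a) * (Real.sin θ * Real.sin (((m : ℝ) + 1) * θ)) -
      Real.sin θ * Real.sin ((m : ℝ) * θ) / (1 + a ^ 2 - 2 * a * Real.cos θ))
      (fun θ _ => hpt θ)]
  rw [intervalIntegral.integral_sub, intervalIntegral.integral_sub,
    intervalIntegral.integral_const_mul, intervalIntegral.integral_const_mul]
  · rw [sinsin m]
  · exact (continuous_const.mul (cont_frac ha _)).intervalIntegrable _ _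
  · exact (continuous_const.mul (cont_num _)).intervalIntegrable _ _
  · exact ((continuous_const.mul (cont_frac ha _)).sub
      (continuous_const.mul (cont_num _))).intervalIntegrable _ _
  · exact (cont_frac ha _).intervalIntegrable _ _

lemma T_succ {a : ℝ} (ha : |a| < 1) (ha0 : a ≠ 0) : ∀ m : ℕ, T a (m + 1) = π / 2 * a ^ m := by
  have h0 : T a 1 = π / 2 := by
    have : T a 1 = ∫ θ in (0:ℝ)..π,
        Real.sin θ * Real.sin ((1 : ℝ) * θ) / (1 + a ^ 2 - 2 * a * Real.cos θ) := by
      unfold T; norm_num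
    rw [this, ← S0 ha ha0]
    apply intervalIntegral.integral_congr
    intro θ _
    norm_num [sq]
  have h1 : T a 2 = π / 2 * a := by
    have := T_rec ha ha0 0
    rw [if_pos rfl, h0] at this
    have hT0 : T a 0 = 0 := by
      unfold T; norm_num
    rw [hT0] at this
    rw [this]
    field_simp
    ring
  intro m
  induction m using Nat.twoStepInduction with
  | zero => simpa using h0
  | one => simpa using h1
  | more m ih1 ih2 =>
    show T a (m + 1 + 2) = π / 2 * a ^ (m + 2)
    rw [T_rec ha ha0 (m + 1), if_neg (Nat.succ_ne_zero m), ih1, ih2]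
    field_simp
    ring

lemma key {a : ℝ} (ha : |a| < 1) (k : ℕ) :
    ∫ θ in (0:ℝ)..π, Real.sin θ * Real.sin (((k : ℝ) + 1) * θ) /
      (1 + a ^ 2 - 2 * a * Real.cos θ) = π / 2 * a ^ k := by
  rcases eq_or_ne a 0 with rfl | ha0
  · have : ∀ θ : ℝ, Real.sin θ * Real.sin (((k : ℝ) + 1) * θ) /
        (1 + (0:ℝ) ^ 2 - 2 * 0 * Real.cos θ) = Real.sin θ * Real.sin (((k : ℝ) + 1) * θ) := by
      intro θ; norm_num
    rw [intervalIntegral.integral_congr (fun θ _ => this θ), sinsin k]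
    rcases Nat.eq_zero_or_pos k with rfl | hk
    · norm_num
    · rw [if_neg hk.ne', zero_pow hk.ne', mul_zero]
  · have := T_succ ha ha0 k
    have hc : T a (k + 1) = ∫ θ in (0:ℝ)..π, Real.sin θ * Real.sin (((k : ℝ) + 1) * θ) /
        (1 + a ^ 2 - 2 * a * Real.cos θ) := by
      unfold T; push_cast; rfl
    rw [← hc, this]

lemma subst {a : ℝ} (ha : |a| < 1) (k : ℕ) :
    ∫ x in (-1 : ℝ)..1,
        Real.sqrt (1 - x ^ 2) * (Polynomial.Chebyshev.U ℝ (k : ℤ)).eval x /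
          ((1 + a ^ 2) - 2 * a * x) =
      ∫ θ in (0:ℝ)..π, Real.sin θ * Real.sin (((k : ℝ) + 1) * θ) /
        (1 + a ^ 2 - 2 * a * Real.cos θ) := by
  set g : ℝ → ℝ := fun x => Real.sqrt (1 - x ^ 2) * (Polynomial.Chebyshev.U ℝ (k : ℤ)).eval x /
    ((1 + a ^ 2) - 2 * a * x) with hg
  have hgc : ContinuousOn g (Icc (-1 : ℝ) 1) := by
    apply ContinuousOn.div
    · exact ((Real.continuous_sqrt.comp (by continuity)).mul
        (Polynomial.Chebyshev.U ℝ (k : ℤ)).continuous).continuousOn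
    · exact (by continuity : Continuous fun x : ℝ => 1 + a ^ 2 - 2 * a * x).continuousOn
    · intro x hx
      exact ne_of_gt (D_pos ha (abs_le.mpr ⟨hx.1, hx.2⟩))
  have himg : Real.cos '' (Set.uIcc 0 π) ⊆ Icc (-1 : ℝ) 1 := by
    rintro y ⟨θ, _, rfl⟩
    exact ⟨Real.neg_one_le_cos θ, Real.cos_le_one θ⟩
  have hsub := intervalIntegral.integral_comp_smul_deriv'' (a := (0:ℝ)) (b := π)
    (f := Real.cos) (f' := fun θ => -Real.sin θ) (g := g)
    Real.continuous_cos.continuousOn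
    (fun x _ => (Real.hasDerivAt_cos x).hasDerivWithinAt)
    (Real.continuous_sin.neg.continuousOn)
    (hgc.mono himg)
  rw [Real.cos_zero, Real.cos_pi] at hsub
  have h2 : ∫ x in (1:ℝ)..(-1), g x = -∫ x in (-1:ℝ)..1, g x :=
    intervalIntegral.integral_symm _ _
  rw [h2] at hsub
  have h3 : ∫ x in (-1:ℝ)..1, g x = ∫ θ in (0:ℝ)..π, Real.sin θ * g (Real.cos θ) := by
    have e : ∫ θ in (0:ℝ)..π, Real.sin θ * g (Real.cos θ) =
        -∫ θ in (0:ℝ)..π, (fun θ => -Real.sin θ) θ • (g ∘ Real.cos) θ := by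
      rw [← intervalIntegral.integral_neg]
      apply intervalIntegral.integral_congr
      intro θ _
      simp [smul_eq_mul, Function.comp]
    rw [e, hsub, neg_neg]
  rw [h3]
  apply intervalIntegral.integral_congr
  intro θ hθ
  rw [uIcc_of_le Real.pi_pos.le] at hθ
  have hsin : 0 ≤ Real.sin θ := Real.sin_nonneg_of_nonneg_of_le_pi hθ.1 hθ.2
  have hsq : Real.sqrt (1 - Real.cos θ ^ 2) = Real.sin θ := by
    rw [← Real.sin_sq θ, Real.sqrt_sq hsin]
  have hU := Polynomial.Chebyshev.U_real_cos θ (k : ℤ)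
  simp only [hg]
  rw [hsq]
  push_cast at hU ⊢
  rw [← hU]
  ring

end CUK


theorem chebyshevU_integral_against_kernel (a : ℝ) (ha : |a| < 1) (k : ℕ) :
    (2 / Real.pi) * ∫ x in (-1 : ℝ)..1,
        Real.sqrt (1 - x ^ 2) * (Polynomial.Chebyshev.U ℝ (k : ℤ)).eval x /
          ((1 + a ^ 2) - 2 * a * x) =
      a ^ k := by
  rw [CUK.subst ha k, CUK.key ha k]
  field_simp
end

section
/- For |a| < 1, the function f(x) = (2/π)·√(1−x²)/((1+a²) − 2ax) on [−1,1] is a probability density, i.e., ∫_{-1}^{1} f(x) dx = 1. -/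
open Real intervalIntegral

private lemma Dpos (a : ℝ) (ha : |a| < 1) (θ : ℝ) : 0 < 1 - 2*a*Real.cos θ + a^2 := by
  have h1 : a * Real.cos θ ≤ |a| := by
    calc a * Real.cos θ ≤ |a * Real.cos θ| := le_abs_self _
    _ = |a| * |Real.cos θ| := abs_mul _ _
    _ ≤ |a| * 1 := by
        exact mul_le_mul_of_nonneg_left (Real.abs_cos_le_one θ) (abs_nonneg a)
    _ = |a| := mul_one _
  nlinarith [sq_abs a, sq_nonneg (1 - |a|)]

private lemma poisson_half (a : ℝ) (ha : |a| < 1) :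
    ∫ θ in (0:ℝ)..(π/2), 1/(1 - 2*a*Real.cos θ + a^2)
      = 2/(1-a^2) * Real.arctan ((1+a)/(1-a)) := by
  have ha1 : (0:ℝ) < 1 - a := by cases abs_lt.mp ha; linarith
  have ha2 : (0:ℝ) < 1 + a := by cases abs_lt.mp ha; linarith
  have ha3 : (1:ℝ) - a^2 ≠ 0 := by nlinarith
  set k : ℝ := (1+a)/(1-a) with hk
  set c : ℝ := 2/(1-a^2) with hc
  have key : ∀ θ ∈ Set.uIcc (0:ℝ) (π/2),
      HasDerivAt (fun θ => c * Real.arctan (k * Real.tan (θ/2)))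
        (1/(1 - 2*a*Real.cos θ + a^2)) θ := by
    intro θ hθ
    rw [Set.uIcc_of_le (by positivity)] at hθ
    have hcospos : 0 < Real.cos (θ/2) := by
      apply Real.cos_pos_of_mem_Ioo
      constructor
      · linarith [hθ.1, Real.pi_pos]
      · linarith [hθ.2, Real.pi_pos]
    have h1 : HasDerivAt (fun θ : ℝ => θ/2) (1/2) θ := (hasDerivAt_id θ).div_const 2
    have h2 : HasDerivAt Real.tan (1/Real.cos (θ/2)^2) (θ/2) :=
      Real.hasDerivAt_tan hcospos.ne'
    have h3 := (h2.comp θ h1).const_mul k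
    have h4 := (Real.hasDerivAt_arctan (k * Real.tan (θ/2))).comp θ h3
    have h5 := h4.const_mul c
    refine h5.congr_deriv (Eq.symm ?_)
    have hcθ : Real.cos θ = 2 * Real.cos (θ/2)^2 - 1 := by
      have := Real.cos_sq (θ/2)
      rw [show 2*(θ/2) = θ by ring] at this
      linarith
    rw [Real.tan_eq_sin_div_cos]
    have hsc : Real.sin (θ/2)^2 = 1 - Real.cos (θ/2)^2 := by
      nlinarith [Real.sin_sq_add_cos_sq (θ/2)]
    have hD : (1 - 2*a*Real.cos θ + a^2) ≠ 0 := (Dpos a ha θ).ne'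
    rw [hcθ] at hD ⊢
    rw [hk, hc]
    field_simp [hcospos.ne', ha1.ne']
    linear_combination ((1-a^2)*(1+a)^2) * hsc
  have hint : IntervalIntegrable (fun θ => 1/(1 - 2*a*Real.cos θ + a^2))
      MeasureTheory.volume 0 (π/2) := by
    apply Continuous.intervalIntegrable
    exact continuous_const.div (by continuity) (fun θ => (Dpos a ha θ).ne')
  rw [intervalIntegral.integral_eq_sub_of_hasDerivAt key hint]
  rw [show (π/2)/2 = π/4 by ring, Real.tan_pi_div_four]
  simp

private lemma poisson (a : ℝ) (ha : |a| < 1) :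
    ∫ θ in (0:ℝ)..π, 1/(1 - 2*a*Real.cos θ + a^2) = π/(1-a^2) := by
  have ha1 : (0:ℝ) < 1 - a := by cases abs_lt.mp ha; linarith
  have ha2 : (0:ℝ) < 1 + a := by cases abs_lt.mp ha; linarith
  have hsplit : (∫ θ in (0:ℝ)..(π/2), 1/(1 - 2*a*Real.cos θ + a^2))
      + (∫ θ in (π/2:ℝ)..π, 1/(1 - 2*a*Real.cos θ + a^2))
      = ∫ θ in (0:ℝ)..π, 1/(1 - 2*a*Real.cos θ + a^2) := by
    apply intervalIntegral.integral_add_adjacent_intervals <;>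
    · apply Continuous.intervalIntegrable
      exact continuous_const.div (by continuity) (fun θ => (Dpos a ha θ).ne')
  have hsecond : (∫ θ in (π/2:ℝ)..π, 1/(1 - 2*a*Real.cos θ + a^2))
      = ∫ θ in (0:ℝ)..(π/2), 1/(1 - 2*(-a)*Real.cos θ + (-a)^2) := by
    have := intervalIntegral.integral_comp_sub_left
      (f := fun θ => 1/(1 - 2*a*Real.cos θ + a^2)) (a := 0) (b := π/2) π
    rw [show π - π/2 = π/2 by ring, show π - 0 = π by ring] at this
    rw [← this]
    apply intervalIntegral.integral_congr
    intro θ _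
    simp only [Real.cos_pi_sub]
    ring_nf
  rw [← hsplit, hsecond, poisson_half a ha,
    poisson_half (-a) (by rwa [abs_neg])]
  have h1 : ((1:ℝ)+ -a)/(1 - -a) = ((1+a)/(1-a))⁻¹ := by
    rw [inv_div]; ring_nf
  rw [h1, Real.arctan_inv_of_pos (by positivity), show (-a)^2 = a^2 by ring]
  have : (1:ℝ) - a^2 ≠ 0 := by nlinarith
  field_simp
  ring

theorem fK1_is_density (a : ℝ) (ha : |a| < 1) :
    ∫ x in (-1 : ℝ)..1,
        (2 / Real.pi) * Real.sqrt (1 - x ^ 2) / ((1 + a ^ 2) - 2 * a * x) = 1 := by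
  have hπ : (0:ℝ) < π := Real.pi_pos
  rcases eq_or_ne a 0 with rfl | ha0
  · have h : (∫ x in (-1:ℝ)..1, 2 / π * Real.sqrt (1 - x ^ 2) / ((1 + (0:ℝ) ^ 2) - 2 * 0 * x))
        = (2/π) * ∫ x in (-1:ℝ)..1, Real.sqrt (1 - x ^ 2) := by
      rw [← intervalIntegral.integral_const_mul]
      apply intervalIntegral.integral_congr
      intro x _
      norm_num
    rw [h, integral_sqrt_one_sub_sq]
    field_simp
  · set g : ℝ → ℝ := fun x => (2 / π) * Real.sqrt (1 - x ^ 2) / ((1 + a ^ 2) - 2 * a * x)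
      with hg
    have hderiv : ∀ θ ∈ Set.uIcc (0:ℝ) π, HasDerivAt Real.cos (-Real.sin θ) θ :=
      fun θ _ => Real.hasDerivAt_cos θ
    have hcont : ContinuousOn (fun θ => -Real.sin θ) (Set.uIcc (0:ℝ) π) :=
      (Real.continuous_sin.neg).continuousOn
    have hgcont : ContinuousOn g (Real.cos '' Set.uIcc (0:ℝ) π) := by
      apply ContinuousOn.div
      · exact (continuous_const.mul (Real.continuous_sqrt.comp
          (by continuity))).continuousOn
      · fun_prop
      · rintro x ⟨θ, -, rfl⟩
        have := Dpos a ha θ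
        intro h
        nlinarith
    have hsub := intervalIntegral.integral_comp_smul_deriv' hderiv hcont hgcont
    rw [Real.cos_zero, Real.cos_pi, intervalIntegral.integral_symm (-1) 1] at hsub
    have hLHS : (∫ θ in (0:ℝ)..π, (-Real.sin θ) • (g ∘ Real.cos) θ)
        = - ∫ θ in (0:ℝ)..π, (2/π) * (Real.sin θ ^ 2 / (1 - 2*a*Real.cos θ + a^2)) := by
      rw [← intervalIntegral.integral_neg]
      apply intervalIntegral.integral_congr
      intro θ hθ
      rw [Set.uIcc_of_le hπ.le] at hθ
      have hs : 0 ≤ Real.sin θ := Real.sin_nonneg_of_nonneg_of_le_pi hθ.1 hθ.2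
      have hsq : Real.sqrt (1 - Real.cos θ ^ 2) = Real.sin θ := by
        rw [show 1 - Real.cos θ ^ 2 = Real.sin θ ^ 2 by
          nlinarith [Real.sin_sq_add_cos_sq θ]]
        exact Real.sqrt_sq hs
      simp only [Function.comp_apply, smul_eq_mul, hg, hsq]
      have hD := (Dpos a ha θ).ne'
      have hD' : (1 + a^2 - 2*a*Real.cos θ) ≠ 0 := by
        have := Dpos a ha θ
        intro h
        linarith
      field_simp [hD', hD]
      ring
    rw [hLHS] at hsub
    have hgoal : (∫ x in (-1:ℝ)..1, g x)
        = ∫ θ in (0:ℝ)..π, (2/π) * (Real.sin θ ^ 2 / (1 - 2*a*Real.cos θ + a^2)) := by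
      linarith [hsub]
    rw [show (∫ x in (-1:ℝ)..1,
        (2 / π) * Real.sqrt (1 - x ^ 2) / ((1 + a ^ 2) - 2 * a * x)) = ∫ x in (-1:ℝ)..1, g x
      from rfl, hgoal]
    rw [intervalIntegral.integral_const_mul]
    have ha2 : (1:ℝ) - a^2 ≠ 0 := by
      have := abs_lt.mp ha; nlinarith
    have hkey : (∫ θ in (0:ℝ)..π, Real.sin θ ^ 2 / (1 - 2*a*Real.cos θ + a^2)) = π/2 := by
      have hcongr : (∫ θ in (0:ℝ)..π, Real.sin θ ^ 2 / (1 - 2*a*Real.cos θ + a^2))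
          = ∫ θ in (0:ℝ)..π, ((1/(2*a)) * Real.cos θ +
            ((1+a^2)/(4*a^2) + (-((1-a^2)^2/(4*a^2))) * (1/(1 - 2*a*Real.cos θ + a^2)))) := by
        apply intervalIntegral.integral_congr
        intro θ _
        have hD := (Dpos a ha θ).ne'
        have hsc : Real.sin θ ^ 2 = 1 - Real.cos θ ^ 2 := by
          nlinarith [Real.sin_sq_add_cos_sq θ]
        dsimp only
        rw [hsc]
        have h2a : (2:ℝ)*a ≠ 0 := by positivity
        rw [div_eq_iff hD, add_mul, add_mul, mul_assoc (-((1-a^2)^2/(4*a^2))), one_div_mul_cancel hD]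
        field_simp
        ring
      rw [hcongr]
      have hi1 : IntervalIntegrable (fun θ => (1/(2*a)) * Real.cos θ)
          MeasureTheory.volume 0 π :=
        (continuous_const.mul Real.continuous_cos).intervalIntegrable 0 π
      have hi2 : IntervalIntegrable (fun θ : ℝ => (1+a^2)/(4*a^2))
          MeasureTheory.volume 0 π := intervalIntegrable_const
      have hi3 : IntervalIntegrable
          (fun θ => (-((1-a^2)^2/(4*a^2))) * (1/(1 - 2*a*Real.cos θ + a^2)))
          MeasureTheory.volume 0 π := by
        apply Continuous.intervalIntegrable
        exact continuous_const.mul (continuous_const.div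
          (((continuous_const.sub (continuous_const.mul Real.continuous_cos)).add
            continuous_const))
          (fun θ => (Dpos a ha θ).ne'))
      rw [intervalIntegral.integral_add hi1 (hi2.add hi3),
        intervalIntegral.integral_add hi2 hi3,
        intervalIntegral.integral_const_mul, intervalIntegral.integral_const_mul,
        integral_cos, intervalIntegral.integral_const,
        poisson a ha]
      simp only [Real.sin_pi, Real.sin_zero, smul_eq_mul]
      field_simp
      ring
    rw [hkey]
    field_simp
end

section
/- For distinct reals a₁, a₂ with |a₁|, |a₂| < 1, ∫_{-1}^{1} (2/π)·(1−a₁a₂)·√(1−x²) / (((1+a₁²)−2a₁x)((1+a₂²)−2a₂x)) dx = 1. -/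
open Real Set intervalIntegral MeasureTheory

lemma Ppos {a x : ℝ} (ha : |a| < 1) (hx : x ∈ Set.Icc (-1:ℝ) 1) :
    0 < (1 + a ^ 2) - 2 * a * x := by
  obtain ⟨hx1, hx2⟩ := hx
  obtain ⟨ha1, ha2⟩ := abs_lt.mp ha
  have hxa : |x| ≤ 1 := abs_le.mpr ⟨hx1, hx2⟩
  have h1 : |a * x| < 1 := by
    rw [abs_mul]
    nlinarith [abs_nonneg a, abs_nonneg x]
  have h2 : a * x < 1 := (abs_lt.mp h1).2
  nlinarith [sq_nonneg (1 - a*x), mul_nonneg (sq_nonneg a) (show (0:ℝ) ≤ 1 - x^2 by nlinarith)]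

lemma int_g (a : ℝ) (ha : |a| < 1) :
    ∫ x in (-1:ℝ)..1, Real.sqrt (1 - x ^ 2) / ((1 + a ^ 2) - 2 * a * x) = π / 2 := by
  rcases eq_or_ne a 0 with rfl | ha0
  · simpa using integral_sqrt_one_sub_sq
  have ha2 : (0:ℝ) < 1 - a ^ 2 := by
    obtain ⟨h1, h2⟩ := abs_lt.mp ha; nlinarith
  have ha4 : (0:ℝ) < 4 * a ^ 2 := by positivity
  set F : ℝ → ℝ := fun x => (1/(4*a^2)) *
      ((1+a^2) * Real.arcsin x - 2*a*Real.sqrt (1-x^2)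
        - 2*(1-a^2) * Real.arctan (((1+a^2) * (x/(1+Real.sqrt (1-x^2))) - 2*a)/(1-a^2)))
    with hF
  have hden : ∀ y : ℝ, 1 + Real.sqrt (1 - y ^ 2) ≠ 0 := by
    intro y; positivity
  have hden' : ∀ y : ℝ, (1:ℝ) + Real.sqrt (1 - y * y) ≠ 0 := by
    intro y; positivity
  have hFcont : Continuous F := by
    apply continuous_const.mul
    apply Continuous.sub
    · apply Continuous.sub
      · exact continuous_const.mul Real.continuous_arcsin
      · apply continuous_const.mul; fun_prop
    · apply continuous_const.mul
      apply Real.continuous_arctan.comp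
      apply Continuous.div_const
      apply Continuous.sub _ continuous_const
      apply continuous_const.mul
      apply Continuous.div continuous_id _ hden
      fun_prop
  have key : ∫ x in (-1:ℝ)..1, Real.sqrt (1 - x ^ 2) / ((1 + a ^ 2) - 2 * a * x)
      = F 1 - F (-1) := by
    apply intervalIntegral.integral_eq_sub_of_hasDerivAt_of_le (by norm_num)
      (hFcont.continuousOn)
    · intro x hx
      obtain ⟨hx1, hx2⟩ := hx
      have h1x : 0 < 1 - x ^ 2 := by nlinarith
      have hs0 : 0 < Real.sqrt (1 - x ^ 2) := Real.sqrt_pos.mpr h1x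
      set s := Real.sqrt (1 - x ^ 2) with hs_def
      have hs2 : s ^ 2 = 1 - x ^ 2 := Real.sq_sqrt h1x.le
      have hP : 0 < (1 + a ^ 2) - 2 * a * x := Ppos ha ⟨hx1.le, hx2.le⟩
      have h1s : (0:ℝ) < 1 + s := by linarith
      -- derivative of sqrt (1 - x^2)
      have hd_sqrt : HasDerivAt (fun y : ℝ => Real.sqrt (1 - y ^ 2)) (-x/s) x := by
        have hinner : HasDerivAt (fun y : ℝ => 1 - y ^ 2) (-(2 * x)) x := by
          simpa using (hasDerivAt_pow 2 x).const_sub 1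
        have := (Real.hasDerivAt_sqrt h1x.ne').comp x hinner
        refine this.congr_deriv ?_
        rw [← hs_def]
        field_simp
      -- derivative of x / (1 + sqrt (1 - x^2))
      have hd_v : HasDerivAt (fun y : ℝ => y / (1 + Real.sqrt (1 - y ^ 2)))
          (1/(s*(1+s))) x := by
        have := (hasDerivAt_id x).div ((hasDerivAt_const x (1:ℝ)).add hd_sqrt)
          (by exact h1s.ne')
        refine this.congr_deriv (Eq.symm ?_)
        simp only [Pi.add_apply, id, ← hs_def]
        field_simp
        linear_combination (-1) * hs2
      -- derivative of the arctan argument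
      have hd_u : HasDerivAt
          (fun y : ℝ => ((1+a^2) * (y/(1+Real.sqrt (1-y^2))) - 2*a)/(1-a^2))
          (((1+a^2) * (1/(s*(1+s))))/(1-a^2)) x :=
        ((hd_v.const_mul (1+a^2)).sub_const (2*a)).div_const (1-a^2)
      have hd_at := hd_u.arctan
      have hd_arcsin : HasDerivAt Real.arcsin (1 / Real.sqrt (1 - x ^ 2)) x :=
        Real.hasDerivAt_arcsin (by linarith) (by linarith)
      have hd_F : HasDerivAt F
          ((1/(4*a^2)) *
            ((1+a^2) * (1/s) - 2*a*(-x/s)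
              - 2*(1-a^2) * (1 / (1 + (((1+a^2) * (x/(1+s)) - 2*a)/(1-a^2)) ^ 2) *
                  (((1+a^2) * (1/(s*(1+s))))/(1-a^2))))) x := by
        rw [hF]
        apply HasDerivAt.const_mul
        apply HasDerivAt.sub
        · exact (hd_arcsin.const_mul (1+a^2)).sub (hd_sqrt.const_mul (2*a))
        · have := hd_at.const_mul (2*(1-a^2))
          rw [← hs_def] at this
          convert this using 1
      refine hd_F.congr_deriv (Eq.symm ?_)
      have hu2 : (0:ℝ) < 1 + (((1+a^2) * (x/(1+s)) - 2*a)/(1-a^2)) ^ 2 := by positivity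
      field_simp
      rw [div_eq_iff (by linarith)]
      linear_combination ((-1) + (4*a^2) + (8*a^2*s^1) + (4*a^2*s^2) + (4*a^2*x^2) + (-16*a^3*x^1) + (-16*a^3*x^1*s^1) + (10*a^4) + (16*a^4*s^1) + (8*a^4*s^2) + (8*a^4*x^2) + (-16*a^5*x^1) + (-16*a^5*x^1*s^1) + (4*a^6) + (8*a^6*s^1) + (4*a^6*s^2) + (4*a^6*x^2) + (-1*a^8)) * hs2
    · exact ((ContinuousOn.div (by fun_prop) (by fun_prop)
        (fun x hx => (Ppos ha hx).ne') : ContinuousOn _ (Set.Icc (-1:ℝ) 1)).mono (by rw [Set.uIcc_of_le] <;> norm_num)).intervalIntegrable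
  rw [key, hF]
  obtain ⟨hal, har⟩ := abs_lt.mp ha
  have hA : (0:ℝ) < 1 - a := by linarith
  have hB : (0:ℝ) < 1 + a := by linarith
  have ht : (0:ℝ) < (1 - a)/(1 + a) := div_pos hA hB
  have e1 : Real.sqrt (1 - (1:ℝ) ^ 2) = 0 := by norm_num
  have e2 : Real.sqrt (1 - (-1:ℝ) ^ 2) = 0 := by norm_num
  simp only [e1, e2, Real.arcsin_one, Real.arcsin_neg_one]
  have harg1 : ((1+a^2) * ((1:ℝ)/(1+0)) - 2*a)/(1-a^2) = (1-a)/(1+a) := by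
    rw [div_eq_div_iff (by nlinarith) (by linarith)]
    ring
  have harg2 : ((1+a^2) * ((-1:ℝ)/(1+0)) - 2*a)/(1-a^2) = -((1+a)/(1-a)) := by
    rw [div_eq_iff (by nlinarith)]
    field_simp
    ring
  rw [harg1, harg2, Real.arctan_neg]
  have hinv : (1+a)/(1-a) = ((1-a)/(1+a))⁻¹ := by rw [inv_div]
  rw [hinv, Real.arctan_inv_of_pos ht]
  field_simp
  ring

theorem fK2_is_density (a₁ a₂ : ℝ) (hne : a₁ ≠ a₂) (h₁ : |a₁| < 1) (h₂ : |a₂| < 1) :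
    ∫ x in (-1 : ℝ)..1,
        (2 / Real.pi) * (1 - a₁ * a₂) * Real.sqrt (1 - x ^ 2) /
          (((1 + a₁ ^ 2) - 2 * a₁ * x) * ((1 + a₂ ^ 2) - 2 * a₂ * x)) = 1 := by
  have hd : a₁ - a₂ ≠ 0 := sub_ne_zero.mpr hne
  have hπ : Real.pi ≠ 0 := Real.pi_ne_zero
  have hint : ∀ a : ℝ, |a| < 1 → IntervalIntegrable
      (fun x => Real.sqrt (1 - x ^ 2) / ((1 + a ^ 2) - 2 * a * x)) volume (-1) 1 := by
    intro a ha
    apply ContinuousOn.intervalIntegrable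
    rw [Set.uIcc_of_le (by norm_num)]
    exact ContinuousOn.div (by fun_prop) (by fun_prop) (fun x hx => (Ppos ha hx).ne')
  set c₁ := (2 / π) * (a₁ / (a₁ - a₂)) with hc₁
  set c₂ := (2 / π) * (-a₂ / (a₁ - a₂)) with hc₂
  have heq : Set.EqOn (fun x => (2 / Real.pi) * (1 - a₁ * a₂) * Real.sqrt (1 - x ^ 2) /
          (((1 + a₁ ^ 2) - 2 * a₁ * x) * ((1 + a₂ ^ 2) - 2 * a₂ * x)))
      (fun x => c₁ * (Real.sqrt (1 - x ^ 2) / ((1 + a₁ ^ 2) - 2 * a₁ * x))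
        + c₂ * (Real.sqrt (1 - x ^ 2) / ((1 + a₂ ^ 2) - 2 * a₂ * x)))
      (Set.uIcc (-1:ℝ) 1) := by
    intro x hx
    rw [Set.uIcc_of_le (by norm_num)] at hx
    have hP1 := (Ppos h₁ hx).ne'
    have hP2 := (Ppos h₂ hx).ne'
    simp only [hc₁, hc₂]
    field_simp
    ring
  rw [intervalIntegral.integral_congr heq,
    intervalIntegral.integral_add ((hint a₁ h₁).const_mul c₁) ((hint a₂ h₂).const_mul c₂),
    intervalIntegral.integral_const_mul, intervalIntegral.integral_const_mul,
    int_g a₁ h₁, int_g a₂ h₂]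
  rw [hc₁, hc₂]
  field_simp
  ring
end

section
/- For real ρ with |ρ| < 1 and x, y ∈ [−1,1], (1−ρ²)/((1−ρ²)² − 4xyρ(1+ρ²) + 4ρ²(x²+y²)) = ∑_{j=0}^∞ ρ^j U_j(x) U_j(y), where U_j is the Chebyshev polynomial of the second kind (Poisson–Mehler formula at q = 0). -/
open Polynomial Polynomial.Chebyshev Filter Topology

noncomputable def pUU (x y : ℝ) (j : ℤ) : ℝ := (U ℝ j).eval x * (U ℝ j).eval y

lemma pUU_rec (x y : ℝ) (j : ℤ) :
    pUU x y (j+4) = 4*x*y*pUU x y (j+3) - (4*x^2+4*y^2-2)*pUU x y (j+2)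
      + 4*x*y*pUU x y (j+1) - pUU x y j := by
  have e2 : U ℝ (j+2) = 2 * X * U ℝ (j+1) - U ℝ j := U_add_two ℝ j
  have e3 : U ℝ (j+3) = 2 * X * U ℝ (j+2) - U ℝ (j+1) := by
    simpa [show j+1+2 = j+3 by ring, show j+1+1 = j+2 by ring] using U_add_two ℝ (j+1)
  have e4 : U ℝ (j+4) = 2 * X * U ℝ (j+3) - U ℝ (j+2) := by
    simpa [show j+2+2 = j+4 by ring, show j+2+1 = j+3 by ring] using U_add_two ℝ (j+2)
  simp only [pUU, e4, e3, e2, eval_sub, eval_mul, eval_ofNat, eval_X, eval_one]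
  ring

noncomputable def EbUU (ρ x y : ℝ) (m : ℤ) : ℝ :=
  pUU x y m + ρ*(pUU x y (m+1) - 4*x*y*pUU x y m)
    + ρ^2*(pUU x y (m+2) - 4*x*y*pUU x y (m+1) + (4*x^2+4*y^2-2)*pUU x y m)
    - ρ^3 * pUU x y (m-1)

lemma EbUU_step (ρ x y : ℝ) (m : ℤ) :
    EbUU ρ x y m - ρ * EbUU ρ x y (m+1)
      = ((1 - ρ^2)^2 - 4*x*y*ρ*(1+ρ^2) + 4*ρ^2*(x^2+y^2)) * pUU x y m := by
  have h := pUU_rec x y (m-1)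
  rw [show m-1+4 = m+3 by ring, show m-1+3 = m+2 by ring, show m-1+2 = m+1 by ring,
    show m-1+1 = m by ring] at h
  simp only [EbUU, show m+1+1 = m+2 by ring, show m+1+2 = m+3 by ring,
    show m+1-1 = m by ring, h]
  ring

lemma key_sum (ρ x y : ℝ) (n : ℕ) :
    ((1 - ρ^2)^2 - 4*x*y*ρ*(1+ρ^2) + 4*ρ^2*(x^2+y^2)) *
      (∑ j ∈ Finset.range n, ρ^j * pUU x y (j : ℤ))
      = (1 - ρ^2) - ρ^n * EbUU ρ x y (n : ℤ) := by
  induction n with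
  | zero =>
    have h0 : pUU x y 0 = 1 := by simp [pUU, U_zero]
    have h1 : pUU x y 1 = (2*x)*(2*y) := by simp [pUU, U_one]
    have h2 : pUU x y 2 = (4*x^2-1)*(4*y^2-1) := by simp [pUU, U_two]
    have hm1 : pUU x y (-1) = 0 := by simp [pUU, U_neg_one]
    simp only [Finset.range_zero, Finset.sum_empty, mul_zero, Nat.cast_zero, pow_zero, one_mul,
      EbUU, zero_add, zero_sub, h0, h1, h2, hm1]
    norm_num
    ring
  | succ n ih =>
    rw [Finset.sum_range_succ, mul_add, ih]
    have h := EbUU_step ρ x y (n : ℤ)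
    push_cast
    linear_combination (-(ρ^n)) * h

lemma U_invariant (x : ℝ) (n : ℕ) :
    (1 - x^2) * ((U ℝ (n:ℤ)).eval x)^2
      + ((U ℝ ((n:ℤ)+1)).eval x - x * (U ℝ (n:ℤ)).eval x)^2 = 1 := by
  induction n with
  | zero => simp [U_zero, U_one]; ring
  | succ n ih =>
    have e2 : U ℝ ((n:ℤ)+2) = 2 * X * U ℝ ((n:ℤ)+1) - U ℝ (n:ℤ) := U_add_two ℝ (n:ℤ)
    have : ((n+1:ℕ):ℤ) = (n:ℤ)+1 := by push_cast; ring
    rw [this, show (n:ℤ)+1+1 = (n:ℤ)+2 by ring, e2]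
    simp only [eval_sub, eval_mul, eval_ofNat, eval_X]
    linear_combination ih

lemma U_bound (x : ℝ) (hx : |x| ≤ 1) (n : ℕ) :
    |(U ℝ (n:ℤ)).eval x| ≤ (n:ℝ) + 1 := by
  induction n with
  | zero => simp [U_zero]
  | succ n ih =>
    have hinv := U_invariant x n
    have hx2 : (1 - x^2) * ((U ℝ (n:ℤ)).eval x)^2 ≥ 0 := by
      apply mul_nonneg
      · nlinarith [abs_nonneg x, sq_abs x, abs_le.mp hx]
      · positivity
    have hv : |(U ℝ ((n:ℤ)+1)).eval x - x * (U ℝ (n:ℤ)).eval x| ≤ 1 := by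
      rw [abs_le]; constructor <;> nlinarith
    have : ((n+1:ℕ):ℤ) = (n:ℤ)+1 := by push_cast; ring
    rw [this]
    calc |(U ℝ ((n:ℤ)+1)).eval x|
        = |x * (U ℝ (n:ℤ)).eval x + ((U ℝ ((n:ℤ)+1)).eval x - x * (U ℝ (n:ℤ)).eval x)| := by
          ring_nf
      _ ≤ |x * (U ℝ (n:ℤ)).eval x| + |(U ℝ ((n:ℤ)+1)).eval x - x * (U ℝ (n:ℤ)).eval x| :=
          abs_add_le _ _
      _ ≤ |x| * |(U ℝ (n:ℤ)).eval x| + 1 := by rw [abs_mul]; linarith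
      _ ≤ 1 * ((n:ℝ)+1) + 1 := by gcongr
      _ = ((n+1:ℕ):ℝ) + 1 := by push_cast; ring

lemma w_pos (ρ x y : ℝ) (hρ : |ρ| < 1) (hx : |x| ≤ 1) (hy : |y| ≤ 1) :
    0 < (1 - ρ^2)^2 - 4*x*y*ρ*(1+ρ^2) + 4*ρ^2*(x^2+y^2) := by
  obtain ⟨hx1, hx2⟩ := abs_le.mp hx
  obtain ⟨hy1, hy2⟩ := abs_le.mp hy
  set s := Real.sqrt ((1-x^2)*(1-y^2)) with hsdef
  have hs0 : 0 ≤ s := Real.sqrt_nonneg _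
  have hxy1 : x*y ≤ 1 := by
    nlinarith [mul_nonneg (by linarith : (0:ℝ) ≤ 1-x) (by linarith : (0:ℝ) ≤ 1+y),
      mul_nonneg (by linarith : (0:ℝ) ≤ 1+x) (by linarith : (0:ℝ) ≤ 1-y)]
  have hxy2 : -1 ≤ x*y := by
    nlinarith [mul_nonneg (by linarith : (0:ℝ) ≤ 1-x) (by linarith : (0:ℝ) ≤ 1-y),
      mul_nonneg (by linarith : (0:ℝ) ≤ 1+x) (by linarith : (0:ℝ) ≤ 1+y)]
  have hs2 : s^2 = (1-x^2)*(1-y^2) :=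
    Real.sq_sqrt (mul_nonneg (by nlinarith) (by nlinarith))
  have hb1 : s ≤ 1 - x*y := by
    have h := Real.sqrt_le_sqrt (show (1-x^2)*(1-y^2) ≤ (1-x*y)^2 by nlinarith [sq_nonneg (x-y)])
    rwa [Real.sqrt_sq (by linarith)] at h
  have hb2 : s ≤ 1 + x*y := by
    have h := Real.sqrt_le_sqrt (show (1-x^2)*(1-y^2) ≤ (1+x*y)^2 by nlinarith [sq_nonneg (x+y)])
    rwa [Real.sqrt_sq (by linarith)] at h
  have ha1 : x*y + s ≤ 1 := by linarith
  have ha2 : -1 ≤ x*y - s := by linarith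
  have ha3 : -1 ≤ x*y + s := by linarith
  have ha4 : x*y - s ≤ 1 := by linarith
  have hr1 : -|ρ| ≤ ρ := neg_abs_le ρ
  have hr2 : ρ ≤ |ρ| := le_abs_self ρ
  have hrr : |ρ|^2 = ρ^2 := sq_abs ρ
  have f1 : 0 < 1 + ρ^2 - 2*ρ*(x*y+s) := by
    nlinarith [mul_nonneg (by linarith : (0:ℝ) ≤ |ρ| - ρ) (by linarith : (0:ℝ) ≤ 1 + (x*y+s)),
      mul_nonneg (by linarith : (0:ℝ) ≤ |ρ| + ρ) (by linarith : (0:ℝ) ≤ 1 - (x*y+s)),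
      sq_nonneg (1 - |ρ|), mul_pos (by linarith : (0:ℝ) < 1 - |ρ|) (by linarith : (0:ℝ) < 1 - |ρ|)]
  have f2 : 0 < 1 + ρ^2 - 2*ρ*(x*y-s) := by
    nlinarith [mul_nonneg (by linarith : (0:ℝ) ≤ |ρ| - ρ) (by linarith : (0:ℝ) ≤ 1 + (x*y-s)),
      mul_nonneg (by linarith : (0:ℝ) ≤ |ρ| + ρ) (by linarith : (0:ℝ) ≤ 1 - (x*y-s)),
      mul_pos (by linarith : (0:ℝ) < 1 - |ρ|) (by linarith : (0:ℝ) < 1 - |ρ|)]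
  have hw : (1 - ρ^2)^2 - 4*x*y*ρ*(1+ρ^2) + 4*ρ^2*(x^2+y^2)
      = (1 + ρ^2 - 2*ρ*(x*y+s)) * (1 + ρ^2 - 2*ρ*(x*y-s)) := by
    linear_combination (4*ρ^2) * hs2
  rw [hw]
  exact mul_pos f1 f2

theorem poisson_mehler_q_zero (ρ x y : ℝ) (hρ : |ρ| < 1)
    (hx : x ∈ Set.Icc (-1 : ℝ) 1) (hy : y ∈ Set.Icc (-1 : ℝ) 1) :
    HasSum
      (fun j : ℕ => ρ ^ j * (Polynomial.Chebyshev.U ℝ (j : ℤ)).eval x *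
        (Polynomial.Chebyshev.U ℝ (j : ℤ)).eval y)
      ((1 - ρ ^ 2) /
        ((1 - ρ ^ 2) ^ 2 - 4 * x * y * ρ * (1 + ρ ^ 2) + 4 * ρ ^ 2 * (x ^ 2 + y ^ 2))) := by
  obtain ⟨hx1, hx2⟩ := hx
  obtain ⟨hy1, hy2⟩ := hy
  have hxa : |x| ≤ 1 := abs_le.mpr ⟨hx1, hx2⟩
  have hya : |y| ≤ 1 := abs_le.mpr ⟨hy1, hy2⟩
  set f : ℕ → ℝ := fun j => ρ ^ j * pUU x y (j : ℤ) with hf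
  have hfeq : (fun j : ℕ => ρ ^ j * (Polynomial.Chebyshev.U ℝ (j : ℤ)).eval x *
      (Polynomial.Chebyshev.U ℝ (j : ℤ)).eval y) = f := by
    funext j; simp [hf, pUU, mul_assoc]
  set w : ℝ := (1 - ρ^2)^2 - 4*x*y*ρ*(1+ρ^2) + 4*ρ^2*(x^2+y^2) with hwdef
  have hw : 0 < w := w_pos ρ x y hρ hxa hya
  have hpb : ∀ j : ℕ, |pUU x y (j : ℤ)| ≤ ((j:ℝ)+1)^2 := by
    intro j
    calc |pUU x y (j : ℤ)| = |(U ℝ (j:ℤ)).eval x| * |(U ℝ (j:ℤ)).eval y| := abs_mul _ _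
      _ ≤ ((j:ℝ)+1) * ((j:ℝ)+1) :=
          mul_le_mul (U_bound x hxa j) (U_bound y hya j) (abs_nonneg _) (by positivity)
      _ = ((j:ℝ)+1)^2 := (sq _).symm
  have hρ' : ‖|ρ|‖ < 1 := by rwa [Real.norm_eq_abs, abs_abs]
  have hg2 : Summable (fun n : ℕ => (n:ℝ)^2 * |ρ|^n) :=
    summable_pow_mul_geometric_of_norm_lt_one 2 hρ'
  have hg1 : Summable (fun n : ℕ => (n:ℝ)^1 * |ρ|^n) :=
    summable_pow_mul_geometric_of_norm_lt_one 1 hρ'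
  have hg0 : Summable (fun n : ℕ => (n:ℝ)^0 * |ρ|^n) :=
    summable_pow_mul_geometric_of_norm_lt_one 0 hρ'
  have hg : Summable (fun n : ℕ => ((n:ℝ)+1)^2 * |ρ|^n) := by
    apply Summable.congr ((hg2.add (hg1.mul_left 2)).add hg0)
    intro n; ring_nf
  have hsum : Summable f := by
    apply Summable.of_norm_bounded hg
    intro j
    rw [hf]
    simp only [Real.norm_eq_abs, abs_mul, abs_pow]
    calc |ρ|^j * |pUU x y (j:ℤ)| ≤ |ρ|^j * (((j:ℝ)+1)^2) := by
          have := hpb j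
          gcongr
      _ = ((j:ℝ)+1)^2 * |ρ|^j := mul_comm _ _
  have hT := hsum.hasSum.tendsto_sum_nat
  have hf0 : Tendsto f atTop (𝓝 0) := hsum.tendsto_atTop_zero
  have hfs : ∀ k : ℕ, Tendsto (fun n => f (n+k)) atTop (𝓝 0) :=
    fun k => hf0.comp (tendsto_add_atTop_nat k)
  have hG : Tendsto (fun n : ℕ => ρ^n * EbUU ρ x y (n:ℤ)) atTop (𝓝 0) := by
    have hcomb : Tendsto (fun n : ℕ => f n + (f (n+1) - 4*x*y*ρ * f n)
        + (f (n+2) - 4*x*y*ρ * f (n+1) + (4*x^2+4*y^2-2)*ρ^2 * f n)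
        - ρ^4 * f (n-1)) atTop
        (𝓝 (0 + (0 - 4*x*y*ρ * 0) + (0 - 4*x*y*ρ * 0 + (4*x^2+4*y^2-2)*ρ^2 * 0) - ρ^4 * 0)) := by
      have hm : Tendsto (fun n : ℕ => f (n-1)) atTop (𝓝 0) :=
        hf0.comp (tendsto_sub_atTop_nat 1)
      exact ((hf0.add ((hfs 1).sub (hf0.const_mul _))).add
        (((hfs 2).sub ((hfs 1).const_mul _)).add (hf0.const_mul _))).sub (hm.const_mul _)
    rw [show (0:ℝ) + (0 - 4*x*y*ρ * 0) + (0 - 4*x*y*ρ * 0 + (4*x^2+4*y^2-2)*ρ^2 * 0)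
        - ρ^4 * 0 = 0 by ring] at hcomb
    apply Tendsto.congr' _ hcomb
    filter_upwards [eventually_ge_atTop 1] with n hn
    obtain ⟨m, rfl⟩ : ∃ m, n = m + 1 := ⟨n-1, (Nat.succ_pred_eq_of_pos hn).symm⟩
    simp only [hf, EbUU, Nat.add_sub_cancel]
    push_cast
    ring_nf
  have hS2 : Tendsto (fun n => ∑ j ∈ Finset.range n, f j) atTop (𝓝 ((1-ρ^2)/w)) := by
    have heq : ∀ n : ℕ, ((1-ρ^2) - ρ^n * EbUU ρ x y (n:ℤ))/w = ∑ j ∈ Finset.range n, f j := by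
      intro n
      rw [eq_comm, eq_div_iff hw.ne', mul_comm]
      exact key_sum ρ x y n
    have := ((tendsto_const_nhds (x := (1-ρ^2)) (f := atTop)).sub hG).div_const w
    rw [show ((1-ρ^2) - 0)/w = (1-ρ^2)/w by ring] at this
    exact this.congr heq
  have htsum : tsum f = (1-ρ^2)/w := tendsto_nhds_unique hT hS2
  rw [hfeq]
  exact htsum ▸ hsum.hasSum
end

section
/- Define w(x,y|ρ) = (1−ρ²)² − 4xyρ(1+ρ²) + 4ρ²(x²+y²) and, for |ρ| < 1 and |y| ≤ 1, f(x|y,ρ) = (2/π)·(1−ρ²)·√(1−x²)/w(x,y|ρ) on [−1,1]. Then for every y ∈ [−1,1], ∫_{-1}^{1} f(x|y,ρ) dx = 1. -/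
open Real intervalIntegral

lemma P_pos {ρ : ℝ} (hρ : |ρ| < 1) {c : ℝ} (hc : |c| ≤ 1) :
    0 < 1 - 2*ρ*c + ρ^2 := by
  have h1 : ρ * c ≤ |ρ| := by
    calc ρ * c ≤ |ρ * c| := le_abs_self _
    _ = |ρ| * |c| := abs_mul _ _
    _ ≤ |ρ| * 1 := by nlinarith [abs_nonneg ρ]
    _ = |ρ| := mul_one _
  nlinarith [sq_abs ρ, abs_nonneg ρ]

lemma cos_geom_hasSum {ρ : ℝ} (hρ : |ρ| < 1) (φ : ℝ) :
    HasSum (fun n : ℕ => ρ^n * Real.cos ((n+1)*φ))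
      ((Real.cos φ - ρ) / (1 - 2*ρ*Real.cos φ + ρ^2)) := by
  set z : ℂ := (ρ : ℂ) * Complex.exp (φ * Complex.I) with hz
  have hnz : ‖z‖ < 1 := by
    rw [hz]
    simp [Complex.norm_exp_ofReal_mul_I, abs_of_nonneg, Complex.norm_real]
    exact hρ
  have hgeo : HasSum (fun n : ℕ => z ^ n) (1 - z)⁻¹ := hasSum_geometric_of_norm_lt_one hnz
  have hmul : HasSum (fun n : ℕ => Complex.exp (φ * Complex.I) * z ^ n)
      (Complex.exp (φ * Complex.I) * (1 - z)⁻¹) := hgeo.mul_left _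
  have hP : (0:ℝ) < 1 - 2*ρ*Real.cos φ + ρ^2 := P_pos hρ (abs_cos_le_one φ)
  have h1 : (1 : ℂ) - z ≠ 0 := by
    refine sub_ne_zero.mpr (fun h => ?_)
    rw [← h] at hnz
    simp at hnz
  have hval : Complex.exp (φ * Complex.I) * (1 - z)⁻¹ =
      Complex.ofReal ((Real.cos φ - ρ)/(1 - 2*ρ*Real.cos φ + ρ^2)) +
      Complex.ofReal ((Real.sin φ)/(1 - 2*ρ*Real.cos φ + ρ^2)) * Complex.I := by
    rw [mul_inv_eq_iff_eq_mul₀ h1, hz, Complex.exp_mul_I]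
    have hab : Real.cos φ ^ 2 + Real.sin φ ^ 2 = 1 := Real.cos_sq_add_sin_sq φ
    set a := Real.cos φ
    set b := Real.sin φ
    set P := 1 - 2*ρ*a + ρ^2 with hPdef
    have hPne : P ≠ 0 := ne_of_gt hP
    rw [Complex.ext_iff]
    constructor
    · simp only [Complex.add_re, Complex.add_im, Complex.mul_re, Complex.mul_im,
        Complex.ofReal_re, Complex.ofReal_im, Complex.I_re, Complex.I_im, Complex.sub_re,
        Complex.sub_im, Complex.one_re, Complex.one_im, Complex.cos_ofReal_re,
        Complex.sin_ofReal_re]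
      push_cast
      simp only [Complex.add_re, Complex.add_im, Complex.mul_re, Complex.mul_im,
        Complex.ofReal_re, Complex.ofReal_im, Complex.I_re, Complex.I_im, Complex.sub_re,
        Complex.sub_im, Complex.one_re, Complex.one_im, Complex.cos_ofReal_re,
        Complex.sin_ofReal_re, Complex.cos_ofReal_im, Complex.sin_ofReal_im]
      field_simp
      linear_combination (-ρ) * hab
    · simp only [Complex.add_re, Complex.add_im, Complex.mul_re, Complex.mul_im,
        Complex.ofReal_re, Complex.ofReal_im, Complex.I_re, Complex.I_im, Complex.sub_re,
        Complex.sub_im, Complex.one_re, Complex.one_im]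
      push_cast
      simp only [Complex.add_re, Complex.add_im, Complex.mul_re, Complex.mul_im,
        Complex.ofReal_re, Complex.ofReal_im, Complex.I_re, Complex.I_im, Complex.sub_re,
        Complex.sub_im, Complex.one_re, Complex.one_im, Complex.cos_ofReal_re,
        Complex.sin_ofReal_re, Complex.cos_ofReal_im, Complex.sin_ofReal_im]
      field_simp
      ring
  rw [hval] at hmul
  have hre := hmul.mapL Complex.reCLM
  convert hre using 2 with n
  · have hterm : Complex.exp (φ * Complex.I) * z ^ n =
        ((ρ^n : ℝ) : ℂ) * Complex.exp ((((n:ℝ)+1)*φ : ℝ) * Complex.I) := by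
      rw [hz, mul_pow, ← Complex.ofReal_pow, ← Complex.exp_nat_mul]
      rw [mul_left_comm, ← Complex.exp_add]
      congr 2
      push_cast
      ring
    simp only [Complex.reCLM_apply, hterm, Complex.re_ofReal_mul, Complex.exp_ofReal_mul_I_re]
  · rw [Complex.reCLM_apply, Complex.add_re, Complex.ofReal_re, Complex.re_ofReal_mul,
      Complex.I_re, mul_zero, add_zero]

noncomputable def wfun (ρ x y : ℝ) : ℝ :=
  (1 - ρ^2)^2 - 4*x*y*ρ*(1+ρ^2) + 4*ρ^2*(x^2+y^2)

lemma wfun_pos {ρ x y : ℝ} (hρ : |ρ| < 1) (hx : |x| ≤ 1) (hy : |y| ≤ 1) :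
    0 < wfun ρ x y := by
  have hx2 : x^2 ≤ 1 := by nlinarith [sq_abs x, abs_nonneg x]
  have hy2 : y^2 ≤ 1 := by nlinarith [sq_abs y, abs_nonneg y]
  set s := Real.sqrt (1 - x^2) with hs
  set t := Real.sqrt (1 - y^2) with ht
  have hs2 : s^2 = 1 - x^2 := Real.sq_sqrt (by linarith)
  have ht2 : t^2 = 1 - y^2 := Real.sq_sqrt (by linarith)
  have hsn : 0 ≤ s := Real.sqrt_nonneg _
  have htn : 0 ≤ t := Real.sqrt_nonneg _
  have hc1 : |x*y + s*t| ≤ 1 := by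
    rw [abs_le]
    constructor <;> nlinarith [sq_nonneg (x-y), sq_nonneg (x+y), sq_nonneg (s-t), sq_nonneg (s+t),
      mul_nonneg hsn htn, sq_nonneg (x*y + s*t), sq_nonneg (x*y - s*t)]
  have hc2 : |x*y - s*t| ≤ 1 := by
    rw [abs_le]
    constructor <;> nlinarith [sq_nonneg (x-y), sq_nonneg (x+y), sq_nonneg (s-t), sq_nonneg (s+t),
      mul_nonneg hsn htn, sq_nonneg (x*y + s*t), sq_nonneg (x*y - s*t)]
  have hP1 := P_pos hρ hc1
  have hP2 := P_pos hρ hc2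
  have key : wfun ρ x y = (1 - 2*ρ*(x*y + s*t) + ρ^2) * (1 - 2*ρ*(x*y - s*t) + ρ^2) := by
    unfold wfun
    linear_combination (4*ρ^2*t^2) * hs2 + (4*ρ^2*(1-x^2)) * ht2
  rw [key]
  exact mul_pos hP1 hP2

lemma sin_sin_hasSum {ρ : ℝ} (hρ : |ρ| < 1) (θ α : ℝ) :
    HasSum (fun n : ℕ => ρ^n * (Real.sin ((n+1)*θ) * Real.sin ((n+1)*α)))
      ((1 - ρ^2) * Real.sin θ * Real.sin α / wfun ρ (Real.cos θ) (Real.cos α)) := by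
  have h1 := cos_geom_hasSum hρ (θ - α)
  have h2 := cos_geom_hasSum hρ (θ + α)
  have h3 := (h1.sub h2).div_const 2
  have hP1 : (0:ℝ) < 1 - 2*ρ*Real.cos (θ-α) + ρ^2 := P_pos hρ (abs_cos_le_one _)
  have hP2 : (0:ℝ) < 1 - 2*ρ*Real.cos (θ+α) + ρ^2 := P_pos hρ (abs_cos_le_one _)
  have hfac : wfun ρ (Real.cos θ) (Real.cos α) =
      (1 - 2*ρ*Real.cos (θ-α) + ρ^2) * (1 - 2*ρ*Real.cos (θ+α) + ρ^2) := by
    rw [Real.cos_sub, Real.cos_add]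
    unfold wfun
    linear_combination (4*ρ^2*Real.sin α^2) * (Real.sin_sq_add_cos_sq θ) +
      (4*ρ^2*(1 - Real.cos θ^2)) * (Real.sin_sq_add_cos_sq α)
  have hfun : (fun n : ℕ => (ρ^n * Real.cos ((n+1)*(θ-α)) - ρ^n * Real.cos ((n+1)*(θ+α)))/2)
      = (fun n : ℕ => ρ^n * (Real.sin ((n+1)*θ) * Real.sin ((n+1)*α))) := by
    funext n
    have e1 : ((n:ℝ)+1)*(θ-α) = ((n:ℝ)+1)*θ - ((n:ℝ)+1)*α := by ring
    have e2 : ((n:ℝ)+1)*(θ+α) = ((n:ℝ)+1)*θ + ((n:ℝ)+1)*α := by ring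
    rw [e1, e2, Real.cos_sub, Real.cos_add]
    ring
  have hvalue : ((Real.cos (θ-α) - ρ) / (1 - 2*ρ*Real.cos (θ-α) + ρ^2)
      - (Real.cos (θ+α) - ρ) / (1 - 2*ρ*Real.cos (θ+α) + ρ^2)) / 2
      = (1 - ρ^2) * Real.sin θ * Real.sin α / wfun ρ (Real.cos θ) (Real.cos α) := by
    rw [hfac, div_sub_div _ _ hP1.ne' hP2.ne', div_div, div_eq_div_iff (by positivity) (by positivity)]
    rw [Real.cos_sub, Real.cos_add]
    ring
  rw [hfun, hvalue] at h3
  exact h3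

lemma integral_cos_nat_mul (m : ℕ) (hm : m ≠ 0) :
    ∫ θ in (0:ℝ)..π, Real.cos ((m:ℝ)*θ) = 0 := by
  have hc : ((m:ℝ)) ≠ 0 := Nat.cast_ne_zero.mpr hm
  rw [intervalIntegral.integral_comp_mul_left Real.cos hc]
  rw [mul_zero, integral_cos, Real.sin_zero, Real.sin_nat_mul_pi]
  simp

lemma sin_orth (n : ℕ) :
    ∫ θ in (0:ℝ)..π, Real.sin θ * Real.sin (((n:ℝ)+1)*θ)
      = if n = 0 then π/2 else 0 := by
  have key : ∀ θ:ℝ, Real.sin θ * Real.sin (((n:ℝ)+1)*θ)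
      = (Real.cos ((n:ℝ)*θ) - Real.cos ((((n+2:ℕ)):ℝ)*θ))/2 := by
    intro θ
    have h1 : (n:ℝ)*θ = ((n:ℝ)+1)*θ - θ := by ring
    have h2 : (((n+2:ℕ)):ℝ)*θ = ((n:ℝ)+1)*θ + θ := by push_cast; ring
    rw [h1, h2, Real.cos_sub, Real.cos_add]; ring
  simp only [key]
  rw [intervalIntegral.integral_div, intervalIntegral.integral_sub
    ((by fun_prop : Continuous fun x:ℝ => Real.cos ((n:ℝ)*x)).intervalIntegrable 0 π)
    ((by fun_prop : Continuous fun x:ℝ => Real.cos (((n+2:ℕ):ℝ)*x)).intervalIntegrable 0 π)]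
  rw [integral_cos_nat_mul (n+2) (by omega)]
  rcases Nat.eq_zero_or_pos n with hn | hn
  · subst hn
    norm_num
  · rw [integral_cos_nat_mul n (by omega)]
    simp [Nat.pos_iff_ne_zero.mp hn]

lemma J_eq {ρ : ℝ} (hρ : |ρ| < 1) {y : ℝ} (hy : y ∈ Set.Ioo (-1:ℝ) 1) :
    ∫ θ in (0:ℝ)..π, (1-ρ^2) * Real.sin θ^2 / wfun ρ (Real.cos θ) y = π/2 := by
  obtain ⟨hy1, hy2⟩ := hy
  set α := Real.arccos y with hα
  have hcos : Real.cos α = y := Real.cos_arccos (by linarith) (by linarith)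
  have hsinpos : 0 < Real.sin α := by
    rw [hα, Real.sin_arccos]
    apply Real.sqrt_pos.mpr
    nlinarith
  have hsinne : Real.sin α ≠ 0 := hsinpos.ne'
  set F : ℕ → ℝ → ℝ := fun n θ =>
    (ρ^n * Real.sin (((n:ℝ)+1)*α) / Real.sin α) * (Real.sin θ * Real.sin (((n:ℝ)+1)*θ)) with hF
  have hlim : ∀ θ : ℝ, HasSum (fun n => F n θ)
      ((1-ρ^2) * Real.sin θ^2 / wfun ρ (Real.cos θ) y) := by
    intro θ
    have h := (sin_sin_hasSum hρ θ α).mul_left (Real.sin θ / Real.sin α)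
    have hfun : (fun n : ℕ => Real.sin θ / Real.sin α *
        (ρ^n * (Real.sin (((n:ℝ)+1)*θ) * Real.sin (((n:ℝ)+1)*α)))) = fun n => F n θ := by
      funext n; rw [hF]; ring
    have hval : Real.sin θ / Real.sin α *
        ((1 - ρ^2) * Real.sin θ * Real.sin α / wfun ρ (Real.cos θ) (Real.cos α))
        = (1-ρ^2) * Real.sin θ^2 / wfun ρ (Real.cos θ) y := by
      rw [hcos]
      have hw : wfun ρ (Real.cos θ) y ≠ 0 := (wfun_pos hρ (abs_cos_le_one θ) (by
        rw [abs_le]; constructor <;> linarith)).ne'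
      field_simp
    rw [hfun, hval] at h
    exact h
  have hsum := intervalIntegral.hasSum_integral_of_dominated_convergence
    (μ := MeasureTheory.volume) (a := (0:ℝ)) (b := π)
    (F := F) (f := fun θ => (1-ρ^2) * Real.sin θ^2 / wfun ρ (Real.cos θ) y)
    (bound := fun n _ => |ρ|^n / Real.sin α)
    (fun n => ((by fun_prop : Continuous (F n))).aestronglyMeasurable)
    (fun n => MeasureTheory.ae_of_all _ (fun θ _ => by
      rw [Real.norm_eq_abs, hF]
      simp only
      rw [abs_mul, abs_div, abs_mul, abs_mul, abs_pow, abs_of_pos hsinpos]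
      have b1 : |Real.sin (((n:ℝ)+1)*α)| ≤ 1 := Real.abs_sin_le_one _
      have b2 : |Real.sin θ| ≤ 1 := Real.abs_sin_le_one _
      have b3 : |Real.sin (((n:ℝ)+1)*θ)| ≤ 1 := Real.abs_sin_le_one _
      calc |ρ|^n * |Real.sin (((n:ℝ)+1)*α)| / Real.sin α * (|Real.sin θ| * |Real.sin (((n:ℝ)+1)*θ)|)
          ≤ |ρ|^n * 1 / Real.sin α * (1 * 1) := by
            gcongr <;> first | positivity | exact pow_nonneg (abs_nonneg _) n | assumption
        _ = |ρ|^n / Real.sin α := by ring))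
    (MeasureTheory.ae_of_all _ (fun θ _ =>
      (summable_geometric_of_lt_one (abs_nonneg ρ) hρ).div_const _))
    (continuous_const.intervalIntegrable 0 π)
    (MeasureTheory.ae_of_all _ (fun θ _ => hlim θ))
  have hint : ∀ n : ℕ, (∫ θ in (0:ℝ)..π, F n θ) = if n = 0 then π/2 else 0 := by
    intro n
    rw [hF]
    simp only
    rw [intervalIntegral.integral_const_mul, sin_orth n]
    rcases Nat.eq_zero_or_pos n with hn | hn
    · subst hn
      norm_num [div_self hsinne]
    · simp [Nat.pos_iff_ne_zero.mp hn]
  rw [funext hint] at hsum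
  exact hsum.unique (hasSum_ite_eq 0 (π/2))

lemma J_eq' {ρ : ℝ} (hρ : |ρ| < 1) {y : ℝ} (hy : y ∈ Set.Icc (-1:ℝ) 1) :
    ∫ θ in (0:ℝ)..π, (1-ρ^2) * Real.sin θ^2 / wfun ρ (Real.cos θ) y = π/2 := by
  have h11 : ((-1:ℝ) ≤ 1) := by norm_num
  have hcontJ : Continuous (fun p : Set.Icc (-1:ℝ) 1 =>
      ∫ θ in (0:ℝ)..π, (1-ρ^2) * Real.sin θ^2 / wfun ρ (Real.cos θ) (p:ℝ)) := by
    have huncurry : Continuous (Function.uncurry fun (p : Set.Icc (-1:ℝ) 1) (θ : ℝ) =>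
        (1-ρ^2) * Real.sin θ^2 / wfun ρ (Real.cos θ) (p:ℝ)) := by
      have hden : Continuous (fun q : Set.Icc (-1:ℝ) 1 × ℝ =>
          wfun ρ (Real.cos q.2) (q.1:ℝ)) := by
        unfold wfun; fun_prop
      refine Continuous.div (by fun_prop) hden ?_
      rintro ⟨p, θ⟩
      exact (wfun_pos hρ (abs_cos_le_one θ) (abs_le.mpr ⟨p.2.1, p.2.2⟩)).ne'
    exact intervalIntegral.continuous_parametric_intervalIntegral_of_continuous' huncurry 0 π
  set j : ℝ → ℝ := fun t =>
    ∫ θ in (0:ℝ)..π, (1-ρ^2) * Real.sin θ^2 / wfun ρ (Real.cos θ)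
      ((Set.projIcc (-1:ℝ) 1 h11 t : ℝ)) with hj
  have hcont : Continuous j := hcontJ.comp continuous_projIcc
  have heq : Set.EqOn j (fun _ => π/2) (Set.Ioo (-1:ℝ) 1) := by
    intro t ht
    have hmem : t ∈ Set.Icc (-1:ℝ) 1 := Set.mem_Icc_of_Ioo ht
    simp only [hj, Set.projIcc_of_mem h11 hmem]
    exact J_eq hρ ht
  have hclos := heq.closure hcont continuous_const
  have hyc : y ∈ closure (Set.Ioo (-1:ℝ) 1) := by
    rw [closure_Ioo (by norm_num : (-1:ℝ) ≠ 1)]; exact hy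
  have := hclos hyc
  simpa only [hj, Set.projIcc_of_mem h11 hy] using this

theorem fM1_is_density (ρ y : ℝ) (hρ : |ρ| < 1) (hy : y ∈ Set.Icc (-1 : ℝ) 1) :
    ∫ x in (-1 : ℝ)..1,
        (2 / Real.pi) * (1 - ρ ^ 2) * Real.sqrt (1 - x ^ 2) /
          ((1 - ρ ^ 2) ^ 2 - 4 * x * y * ρ * (1 + ρ ^ 2) + 4 * ρ ^ 2 * (x ^ 2 + y ^ 2)) = 1 := by
  have habs : ∀ x ∈ Set.Icc (-1:ℝ) 1, |x| ≤ 1 := fun x hx => abs_le.mpr ⟨hx.1, hx.2⟩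
  set h : ℝ → ℝ := fun x => 2 / π * (1 - ρ^2) * Real.sqrt (1 - x^2) / wfun ρ x y with hh
  have hgoal : (∫ x in (-1:ℝ)..1,
      (2 / Real.pi) * (1 - ρ ^ 2) * Real.sqrt (1 - x ^ 2) /
        ((1 - ρ ^ 2) ^ 2 - 4 * x * y * ρ * (1 + ρ ^ 2) + 4 * ρ ^ 2 * (x ^ 2 + y ^ 2)))
      = ∫ x in (-1:ℝ)..1, h x :=
    intervalIntegral.integral_congr (fun x _ => by simp only [hh, wfun])
  rw [hgoal]
  have hconth : ContinuousOn h (Set.Icc (-1:ℝ) 1) := by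
    have hden : Continuous (fun x : ℝ => wfun ρ x y) := by unfold wfun; fun_prop
    refine ContinuousOn.div (by fun_prop) hden.continuousOn ?_
    intro x hx
    exact (wfun_pos hρ (habs x hx) (habs y hy)).ne'
  have hcv := intervalIntegral.integral_comp_smul_deriv'' (a := (0:ℝ)) (b := π)
    (f := Real.cos) (f' := fun θ => -Real.sin θ) (g := h)
    (Real.continuous_cos.continuousOn)
    (fun x _ => (Real.hasDerivAt_cos x).hasDerivWithinAt)
    (Real.continuous_sin.continuousOn.neg)
    (hconth.mono (by
      intro u hu
      obtain ⟨θ, _, hθ⟩ := hu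
      rw [← hθ]
      exact ⟨Real.neg_one_le_cos θ, Real.cos_le_one θ⟩))
  rw [Real.cos_zero, Real.cos_pi] at hcv
  rw [intervalIntegral.integral_symm (-1) 1] at hcv
  have h4 : (∫ θ in (0:ℝ)..π, (fun θ => -Real.sin θ) θ • (h ∘ Real.cos) θ)
      = -∫ θ in (0:ℝ)..π, Real.sin θ * h (Real.cos θ) := by
    rw [← intervalIntegral.integral_neg]
    congr 1
    funext θ
    simp [smul_eq_mul]
  rw [h4] at hcv
  rw [neg_inj] at hcv
  rw [← hcv]
  have h5 : (∫ θ in (0:ℝ)..π, Real.sin θ * h (Real.cos θ))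
      = ∫ θ in (0:ℝ)..π, 2/π * ((1-ρ^2) * Real.sin θ^2 / wfun ρ (Real.cos θ) y) := by
    apply intervalIntegral.integral_congr
    intro θ hθ
    rw [Set.uIcc_of_le Real.pi_nonneg] at hθ
    have hsn : 0 ≤ Real.sin θ := Real.sin_nonneg_of_nonneg_of_le_pi hθ.1 hθ.2
    simp only [hh]
    rw [show (1:ℝ) - Real.cos θ^2 = Real.sin θ^2 by rw [Real.sin_sq], Real.sqrt_sq hsn]
    ring
  rw [h5, intervalIntegral.integral_const_mul, J_eq' hρ hy]
  field_simp
end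

section
/- With w(x,y|ρ) = (1−ρ²)² − 4xyρ(1+ρ²) + 4ρ²(x²+y²) and f(x|y,ρ) = (2/π)(1−ρ²)√(1−x²)/w(x,y|ρ), for |ρ| < 1 and x ∈ [−1,1]: ∫_{-1}^{1} f(x|y,ρ)·(2/π)√(1−y²) dy = (2/π)√(1−x²). (The semicircle law is invariant for the kernel f.) -/
open Real

private lemma d_pos {ρ : ℝ} (hρ : |ρ| < 1) {c : ℝ} (hc : |c| ≤ 1) :
    0 < 1 - 2 * ρ * c + ρ ^ 2 := by
  have h1 : ρ * c ≤ |ρ| := by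
    calc ρ * c ≤ |ρ * c| := le_abs_self _
    _ = |ρ| * |c| := abs_mul ρ c
    _ ≤ |ρ| * 1 := by gcongr
    _ = |ρ| := mul_one _
  have h2 : ρ ^ 2 = |ρ| ^ 2 := (sq_abs ρ).symm
  nlinarith [abs_nonneg ρ]

private lemma geom_cos {ρ : ℝ} (hρ : |ρ| < 1) (γ : ℝ) :
    HasSum (fun n : ℕ => ρ ^ n * Real.cos (((n : ℝ) + 1) * γ))
      ((Real.cos γ - ρ) / (1 - 2 * ρ * Real.cos γ + ρ ^ 2)) := by
  set z : ℂ := (ρ : ℂ) * Complex.exp ((γ : ℂ) * Complex.I) with hz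
  have hnorm : ‖z‖ < 1 := by
    rw [hz]
    simp only [norm_mul, Complex.norm_real, Complex.norm_exp_ofReal_mul_I, mul_one]
    exact hρ
  have h := (hasSum_geometric_of_norm_lt_one hnorm).mul_left (Complex.exp ((γ : ℂ) * Complex.I))
  have h2 := Complex.hasSum_re h
  have hterm : ∀ n : ℕ, (Complex.exp ((γ : ℂ) * Complex.I) * z ^ n).re
      = ρ ^ n * Real.cos (((n : ℝ) + 1) * γ) := by
    intro n
    have harg : ((((n : ℝ) + 1) * γ : ℝ) : ℂ) * Complex.I
        = (γ : ℂ) * Complex.I + (n : ℂ) * ((γ : ℂ) * Complex.I) := by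
      push_cast; ring
    have e1 : Complex.exp ((γ : ℂ) * Complex.I) * z ^ n
        = ((ρ ^ n : ℝ) : ℂ) * Complex.exp ((((n : ℝ) + 1) * γ : ℝ) * Complex.I) := by
      rw [hz, mul_pow, ← Complex.exp_nat_mul, harg, Complex.exp_add]
      push_cast; ring
    rw [e1, Complex.re_ofReal_mul, Complex.exp_ofReal_mul_I_re]
  have hval : (Complex.exp ((γ : ℂ) * Complex.I) * (1 - z)⁻¹).re
      = (Real.cos γ - ρ) / (1 - 2 * ρ * Real.cos γ + ρ ^ 2) := by
    have hd := d_pos hρ (Real.abs_cos_le_one γ)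
    have hsc := Real.sin_sq_add_cos_sq γ
    rw [← div_eq_mul_inv, Complex.div_re]
    simp only [Complex.normSq_apply, Complex.sub_re, Complex.sub_im, Complex.one_re,
      Complex.one_im, hz, Complex.re_ofReal_mul, Complex.im_ofReal_mul,
      Complex.exp_ofReal_mul_I_re, Complex.exp_ofReal_mul_I_im]
    have hN : (1 - ρ * Real.cos γ) * (1 - ρ * Real.cos γ)
        + (0 - ρ * Real.sin γ) * (0 - ρ * Real.sin γ)
        = 1 - 2 * ρ * Real.cos γ + ρ ^ 2 := by linear_combination ρ ^ 2 * hsc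
    rw [hN, ← add_div]
    congr 1
    linear_combination -ρ * hsc
  have hfun : (fun n : ℕ => (Complex.exp ((γ : ℂ) * Complex.I) * z ^ n).re)
      = fun n : ℕ => ρ ^ n * Real.cos (((n : ℝ) + 1) * γ) := funext hterm
  rw [← hval, ← hfun]
  exact h2

private lemma key_hasSum {ρ : ℝ} (hρ : |ρ| < 1) (α β : ℝ) :
    HasSum (fun n : ℕ => ρ ^ n * (Real.sin (((n : ℝ) + 1) * α) * Real.sin (((n : ℝ) + 1) * β)))
      ((1 - ρ ^ 2) * (Real.sin α * Real.sin β) /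
        ((1 - 2 * ρ * Real.cos (α - β) + ρ ^ 2) * (1 - 2 * ρ * Real.cos (α + β) + ρ ^ 2))) := by
  have h := ((geom_cos hρ (α - β)).sub (geom_cos hρ (α + β))).div_const 2
  have hfun : (fun n : ℕ => (ρ ^ n * Real.cos (((n : ℝ) + 1) * (α - β))
        - ρ ^ n * Real.cos (((n : ℝ) + 1) * (α + β))) / 2)
      = fun n : ℕ => ρ ^ n * (Real.sin (((n : ℝ) + 1) * α) * Real.sin (((n : ℝ) + 1) * β)) := by
    funext n
    have hc1 : ((n : ℝ) + 1) * (α - β) = ((n : ℝ) + 1) * α - ((n : ℝ) + 1) * β := by ring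
    have hc2 : ((n : ℝ) + 1) * (α + β) = ((n : ℝ) + 1) * α + ((n : ℝ) + 1) * β := by ring
    rw [hc1, hc2, Real.cos_sub, Real.cos_add]
    ring
  rw [hfun] at h
  convert h using 1
  · rfl
  have hd1 := (d_pos hρ (Real.abs_cos_le_one (α - β))).ne'
  have hd2 := (d_pos hρ (Real.abs_cos_le_one (α + β))).ne'
  simp only [Real.cos_sub, Real.cos_add] at hd1 hd2 ⊢
  rw [div_sub_div _ _ hd1 hd2, div_div,
    div_eq_div_iff (mul_ne_zero hd1 hd2) (mul_ne_zero (mul_ne_zero hd1 hd2) two_ne_zero)]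
  ring

private lemma prod_d (ρ α β : ℝ) :
    (1 - 2 * ρ * Real.cos (α - β) + ρ ^ 2) * (1 - 2 * ρ * Real.cos (α + β) + ρ ^ 2)
      = (1 - ρ ^ 2) ^ 2 - 4 * Real.cos α * Real.cos β * ρ * (1 + ρ ^ 2)
        + 4 * ρ ^ 2 * (Real.cos α ^ 2 + Real.cos β ^ 2) := by
  have hα := Real.sin_sq_add_cos_sq α
  have hβ := Real.sin_sq_add_cos_sq β
  rw [Real.cos_sub, Real.cos_add]
  linear_combination (-4 * ρ ^ 2 * Real.sin β ^ 2) * hα + (-4 * ρ ^ 2 * (1 - Real.cos α ^ 2)) * hβ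

private lemma integral_sin_arccos (n : ℕ) :
    (∫ y in (-1 : ℝ)..1, Real.sin (((n : ℝ) + 1) * Real.arccos y))
      = if n = 0 then Real.pi / 2 else 0 := by
  have hsub : (∫ y in (-1 : ℝ)..1, Real.sin (((n : ℝ) + 1) * Real.arccos y))
      = ∫ θ in (0 : ℝ)..Real.pi, Real.sin θ * Real.sin (((n : ℝ) + 1) * θ) := by
    have h := intervalIntegral.integral_comp_smul_deriv (a := 0) (b := Real.pi)
      (f := Real.cos) (f' := fun θ => -Real.sin θ)
      (g := fun y => Real.sin (((n : ℝ) + 1) * Real.arccos y))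
      (fun θ _ => Real.hasDerivAt_cos θ) (Real.continuous_sin.neg.continuousOn) (by continuity)
    rw [Real.cos_zero, Real.cos_pi] at h
    simp only [Function.comp_apply, smul_eq_mul] at h
    rw [intervalIntegral.integral_symm 1 (-1), ← h, ← intervalIntegral.integral_neg]
    apply intervalIntegral.integral_congr
    intro θ hθ
    rw [Set.uIcc_of_le Real.pi_pos.le] at hθ
    simp only [smul_eq_mul]
    rw [Real.arccos_cos hθ.1 hθ.2]
    ring
  rw [hsub]
  have hps : ∀ θ : ℝ, Real.sin θ * Real.sin (((n : ℝ) + 1) * θ)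
      = (Real.cos ((n : ℝ) * θ) - Real.cos (((n : ℝ) + 2) * θ)) / 2 := by
    intro θ
    have h1 : (n : ℝ) * θ = ((n : ℝ) + 1) * θ - θ := by ring
    have h2 : ((n : ℝ) + 2) * θ = ((n : ℝ) + 1) * θ + θ := by ring
    rw [h1, h2, Real.cos_sub, Real.cos_add]
    ring
  simp only [hps]
  rw [intervalIntegral.integral_div]
  rw [intervalIntegral.integral_sub (Continuous.intervalIntegrable (by continuity) _ _)
    (Continuous.intervalIntegrable (by continuity) _ _)]
  have hc2 : (∫ θ in (0 : ℝ)..Real.pi, Real.cos (((n : ℝ) + 2) * θ)) = 0 := by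
    have hne : ((n : ℝ) + 2) ≠ 0 := by positivity
    rw [intervalIntegral.integral_comp_mul_left Real.cos hne]
    rw [mul_zero, integral_cos, Real.sin_zero]
    have he : ((n : ℝ) + 2) * Real.pi = ((n + 2 : ℕ) : ℝ) * Real.pi := by push_cast; ring
    rw [he, Real.sin_nat_mul_pi]
    simp
  rcases Nat.eq_zero_or_pos n with hn | hn
  · subst hn
    rw [if_pos rfl, hc2]
    have hc0 : (∫ θ in (0 : ℝ)..Real.pi, Real.cos (((0 : ℕ) : ℝ) * θ)) = Real.pi := by
      simp
    rw [hc0]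
    norm_num
  · have hne : (n : ℝ) ≠ 0 := Nat.cast_ne_zero.mpr hn.ne'
    rw [if_neg hn.ne']
    have hc1 : (∫ θ in (0 : ℝ)..Real.pi, Real.cos ((n : ℝ) * θ)) = 0 := by
      rw [intervalIntegral.integral_comp_mul_left Real.cos hne]
      rw [mul_zero, integral_cos, Real.sin_zero, Real.sin_nat_mul_pi]
      simp
    rw [hc1, hc2]
    norm_num



theorem semicircle_invariant (ρ x : ℝ) (hρ : |ρ| < 1) (hx : x ∈ Set.Icc (-1 : ℝ) 1) :
    ∫ y in (-1 : ℝ)..1,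
        ((2 / Real.pi) * (1 - ρ ^ 2) * Real.sqrt (1 - x ^ 2) /
            ((1 - ρ ^ 2) ^ 2 - 4 * x * y * ρ * (1 + ρ ^ 2) + 4 * ρ ^ 2 * (x ^ 2 + y ^ 2))) *
          ((2 / Real.pi) * Real.sqrt (1 - y ^ 2)) =
      (2 / Real.pi) * Real.sqrt (1 - x ^ 2) := by
  obtain ⟨hx1, hx2⟩ := hx
  set α := Real.arccos x with hαdef
  have hcosα : Real.cos α = x := Real.cos_arccos hx1 hx2
  have hsinα : Real.sin α = Real.sqrt (1 - x ^ 2) := Real.sin_arccos x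
  set F : ℕ → ℝ → ℝ := fun n y =>
    (2 / Real.pi) ^ 2 * (ρ ^ n * Real.sin (((n : ℝ) + 1) * α)) *
      Real.sin (((n : ℝ) + 1) * Real.arccos y) with hF
  have hmain : HasSum (fun n : ℕ => ∫ y in (-1 : ℝ)..1, F n y)
      (∫ y in (-1 : ℝ)..1,
        ((2 / Real.pi) * (1 - ρ ^ 2) * Real.sqrt (1 - x ^ 2) /
            ((1 - ρ ^ 2) ^ 2 - 4 * x * y * ρ * (1 + ρ ^ 2) + 4 * ρ ^ 2 * (x ^ 2 + y ^ 2))) *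
          ((2 / Real.pi) * Real.sqrt (1 - y ^ 2))) := by
    apply intervalIntegral.hasSum_integral_of_dominated_convergence
      (bound := fun n _ => (2 / Real.pi) ^ 2 * |ρ| ^ n)
    · intro n
      exact (Continuous.aestronglyMeasurable (by continuity))
    · intro n
      filter_upwards with y _
      rw [hF]
      have hb1 : |Real.sin (((n : ℝ) + 1) * α)| ≤ 1 := Real.abs_sin_le_one _
      have hb2 : |Real.sin (((n : ℝ) + 1) * Real.arccos y)| ≤ 1 := Real.abs_sin_le_one _
      have h2π : (0:ℝ) ≤ (2 / Real.pi) ^ 2 := sq_nonneg _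
      calc |(2 / Real.pi) ^ 2 * (ρ ^ n * Real.sin (((n : ℝ) + 1) * α)) *
            Real.sin (((n : ℝ) + 1) * Real.arccos y)|
          = (2 / Real.pi) ^ 2 * |ρ| ^ n * (|Real.sin (((n : ℝ) + 1) * α)| *
            |Real.sin (((n : ℝ) + 1) * Real.arccos y)|) := by
            rw [abs_mul, abs_mul, abs_mul, abs_pow, abs_pow,
              abs_of_nonneg (by positivity : (0:ℝ) ≤ 2 / Real.pi)]
            ring
        _ ≤ (2 / Real.pi) ^ 2 * |ρ| ^ n * (1 * 1) := by
            gcongr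
        _ = (2 / Real.pi) ^ 2 * |ρ| ^ n := by ring
    · filter_upwards with y
      intro _
      exact (summable_geometric_of_lt_one (abs_nonneg ρ) hρ).mul_left _
    · exact intervalIntegrable_const
    · filter_upwards with y
      intro hy
      rw [Set.uIoc_of_le (by norm_num : (-1:ℝ) ≤ 1)] at hy
      have hy1 : -1 ≤ y := hy.1.le
      have hy2 : y ≤ 1 := hy.2
      have h := (key_hasSum hρ α (Real.arccos y)).mul_left ((2 / Real.pi) ^ 2)
      convert h using 1
      · rfl
      · funext n
        rw [hF]
        ring
      · rw [prod_d, hcosα, Real.cos_arccos hy1 hy2, hsinα, Real.sin_arccos]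
        ring
  have hint : ∀ n : ℕ, (∫ y in (-1 : ℝ)..1, F n y)
      = if n = 0 then (2 / Real.pi) * Real.sqrt (1 - x ^ 2) else 0 := by
    intro n
    rw [hF]
    rw [intervalIntegral.integral_const_mul, integral_sin_arccos n]
    rcases Nat.eq_zero_or_pos n with hn | hn
    · subst hn
      rw [if_pos rfl, if_pos rfl]
      have : (((0 : ℕ) : ℝ) + 1) * α = α := by norm_num
      rw [this, hsinα]
      have hπ : Real.pi ≠ 0 := Real.pi_ne_zero
      field_simp
    · rw [if_neg hn.ne', if_neg hn.ne', mul_zero]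
  rw [funext hint] at hmain
  exact hmain.unique (hasSum_ite_eq 0 _)
end

section
/- For |a| < 1 and every m ≥ 1, ∫_{-1}^{1} (U_m(x) − a·U_{m−1}(x)) · (2/π)·√(1−x²)/((1+a²) − 2ax) dx = 0; i.e., the polynomials P_m(x) = U_m(x) − a U_{m−1}(x) integrate to zero against the density f_{K1}(x|a). -/
open Real intervalIntegral Polynomial.Chebyshev

lemma sin_mul_sin_integral (k : ℕ) (hk : 2 ≤ k) :
    ∫ θ in (0:ℝ)..π, Real.sin (k * θ) * Real.sin θ = 0 := by
  have hk1 : ((k:ℝ) - 1) ≠ 0 := by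
    have : (2:ℝ) ≤ k := by exact_mod_cast hk
    linarith
  have hk2 : ((k:ℝ) + 1) ≠ 0 := by positivity
  have key : ∀ θ : ℝ, HasDerivAt
      (fun θ : ℝ => Real.sin (((k:ℝ)-1)*θ) / (2*((k:ℝ)-1)) - Real.sin (((k:ℝ)+1)*θ) / (2*((k:ℝ)+1)))
      (Real.sin (k*θ) * Real.sin θ) θ := by
    intro θ
    have h1 : HasDerivAt (fun θ : ℝ => Real.sin (((k:ℝ)-1)*θ)) (Real.cos (((k:ℝ)-1)*θ) * ((k:ℝ)-1)) θ := by
      simpa [Function.comp_def] using (Real.hasDerivAt_sin (((k:ℝ)-1)*θ)).comp θ ((hasDerivAt_id θ).const_mul ((k:ℝ)-1))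
    have h2 : HasDerivAt (fun θ : ℝ => Real.sin (((k:ℝ)+1)*θ)) (Real.cos (((k:ℝ)+1)*θ) * ((k:ℝ)+1)) θ := by
      simpa [Function.comp_def] using (Real.hasDerivAt_sin (((k:ℝ)+1)*θ)).comp θ ((hasDerivAt_id θ).const_mul ((k:ℝ)+1))
    have := (h1.div_const (2*((k:ℝ)-1))).sub (h2.div_const (2*((k:ℝ)+1)))
    refine this.congr_deriv ?_
    symm
    have hcs := Real.cos_sub_cos (((k:ℝ)-1)*θ) (((k:ℝ)+1)*θ)
    have e1 : ((((k:ℝ)-1)*θ + ((k:ℝ)+1)*θ)/2) = (k:ℝ)*θ := by ring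
    have e2 : ((((k:ℝ)-1)*θ - ((k:ℝ)+1)*θ)/2) = -θ := by ring
    rw [e1, e2, Real.sin_neg] at hcs
    rw [mul_div_mul_right _ _ hk1, mul_div_mul_right _ _ hk2]
    linear_combination (-1/2:ℝ) * hcs
  rw [intervalIntegral.integral_eq_sub_of_hasDerivAt (fun θ _ => key θ)
    (((Real.continuous_sin.comp (continuous_const.mul continuous_id)).mul Real.continuous_sin).intervalIntegrable 0 π)]
  have z1 : Real.sin (((k:ℝ)-1)*π) = 0 := by
    have : ((k:ℝ)-1) = ((k:ℤ)-1 : ℤ) := by push_cast; ring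
    rw [this]; exact Real.sin_int_mul_pi _
  have z2 : Real.sin (((k:ℝ)+1)*π) = 0 := by
    have : ((k:ℝ)+1) = ((k:ℤ)+1 : ℤ) := by push_cast; ring
    rw [this]; exact Real.sin_int_mul_pi _
  simp [z1, z2]

lemma U_sqrt_bound (n : ℤ) (x : ℝ) (hx : x ∈ Set.Icc (-1:ℝ) 1) :
    |(U ℝ n).eval x * Real.sqrt (1 - x ^ 2)| ≤ 1 := by
  have h1 : Real.cos (Real.arccos x) = x := Real.cos_arccos hx.1 hx.2
  have h2 : Real.sin (Real.arccos x) = Real.sqrt (1 - x ^ 2) := Real.sin_arccos x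
  have := U_real_cos (Real.arccos x) n
  rw [h1, h2] at this
  rw [this]
  exact abs_le.mpr ⟨Real.neg_one_le_sin _, Real.sin_le_one _⟩

lemma U_sqrt_integral (n : ℕ) (hn : 1 ≤ n) :
    ∫ x in (-1:ℝ)..1, (U ℝ (n:ℤ)).eval x * Real.sqrt (1 - x ^ 2) = 0 := by
  have hg : Continuous fun x : ℝ => (U ℝ (n:ℤ)).eval x * Real.sqrt (1 - x ^ 2) :=
    ((U ℝ (n:ℤ)).continuous_aeval).mul
      (Real.continuous_sqrt.comp (continuous_const.sub (continuous_pow 2)))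
  have hder : ∀ θ ∈ Set.uIcc (0:ℝ) π, HasDerivAt Real.cos (-Real.sin θ) θ :=
    fun θ _ => Real.hasDerivAt_cos θ
  have hsub := intervalIntegral.integral_comp_smul_deriv hder
    (Real.continuous_sin.neg.continuousOn)
    hg
  rw [Real.cos_zero, Real.cos_pi] at hsub
  have : ∫ x in (-1:ℝ)..1, (U ℝ (n:ℤ)).eval x * Real.sqrt (1 - x ^ 2)
      = ∫ θ in (0:ℝ)..π, Real.sin ((n+1) * θ) * Real.sin θ := by
    rw [intervalIntegral.integral_symm (-1) 1] at hsub
    rw [show (∫ x in (-1:ℝ)..1, (U ℝ (n:ℤ)).eval x * Real.sqrt (1 - x ^ 2))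
        = ∫ θ in (0:ℝ)..π, -((-Real.sin θ) •
          ((fun x => (U ℝ (n:ℤ)).eval x * Real.sqrt (1 - x ^ 2)) ∘ Real.cos) θ) from by
      rw [intervalIntegral.integral_neg, hsub, neg_neg]]
    apply intervalIntegral.integral_congr
    intro θ hθ
    rw [Set.uIcc_of_le Real.pi_nonneg] at hθ
    have hs : Real.sin θ ≥ 0 := Real.sin_nonneg_of_mem_Icc ⟨hθ.1, hθ.2⟩
    have hsq : Real.sqrt (1 - Real.cos θ ^ 2) = Real.sin θ := by
      rw [show (1 : ℝ) - Real.cos θ ^ 2 = Real.sin θ ^ 2 by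
        have := Real.sin_sq_add_cos_sq θ; linarith]
      exact Real.sqrt_sq hs
    have hU := U_real_cos θ (n:ℤ)
    push_cast at hU
    simp only [smul_eq_mul, Function.comp]
    rw [hsq]
    linear_combination Real.sin θ * hU
  rw [this]
  have h := sin_mul_sin_integral (n+1) (by omega)
  push_cast at h
  exact h

noncomputable def Iq (a : ℝ) (n : ℕ) : ℝ :=
  ∫ x in (-1 : ℝ)..1,
      ((Polynomial.Chebyshev.U ℝ (n : ℤ)).eval x -
          a * (Polynomial.Chebyshev.U ℝ ((n : ℤ) - 1)).eval x) *
        ((2 / Real.pi) * Real.sqrt (1 - x ^ 2) / ((1 + a ^ 2) - 2 * a * x))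

lemma denom_lb {a : ℝ} (ha : |a| < 1) {x : ℝ} (hx : x ∈ Set.Icc (-1:ℝ) 1) :
    (1 - |a|)^2 ≤ (1 + a^2) - 2*a*x := by
  have h1 : a * x ≤ |a| := by
    calc a*x ≤ |a*x| := le_abs_self _
    _ = |a| * |x| := abs_mul a x
    _ ≤ |a| * 1 := mul_le_mul_of_nonneg_left (abs_le.mpr ⟨hx.1, hx.2⟩) (abs_nonneg a)
    _ = |a| := mul_one _
  nlinarith [sq_abs a]

lemma sq_abs_pos {a : ℝ} (ha : |a| < 1) : (0:ℝ) < (1 - |a|)^2 := by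
  have : (0:ℝ) < 1 - |a| := by linarith
  positivity

lemma integrable_integrand (a : ℝ) (ha : |a| < 1) (n : ℤ) :
    IntervalIntegrable (fun x => ((Polynomial.Chebyshev.U ℝ n).eval x -
          a * (Polynomial.Chebyshev.U ℝ (n - 1)).eval x) *
        ((2 / Real.pi) * Real.sqrt (1 - x ^ 2) / ((1 + a ^ 2) - 2 * a * x)))
      MeasureTheory.volume (-1) 1 := by
  apply ContinuousOn.intervalIntegrable
  rw [Set.uIcc_of_le (by norm_num : (-1:ℝ) ≤ 1)]
  apply ContinuousOn.mul
  · exact (((Polynomial.Chebyshev.U ℝ n).continuous_aeval).sub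
      (continuous_const.mul (Polynomial.Chebyshev.U ℝ (n-1)).continuous_aeval)).continuousOn
  · apply ContinuousOn.div
    · exact (continuous_const.mul
        (Real.continuous_sqrt.comp (continuous_const.sub (continuous_pow 2)))).continuousOn
    · exact (continuous_const.sub (continuous_const.mul continuous_id)).continuousOn
    · intro x hx
      have hlb := denom_lb ha hx
      have hp := sq_abs_pos ha
      intro h; rw [h] at hlb; linarith

lemma Iq_step (a : ℝ) (ha : |a| < 1) (n : ℕ) (hn : 1 ≤ n) : Iq a n = a * Iq a (n+1) := by
  have key : Set.EqOn
      (fun x => ((Polynomial.Chebyshev.U ℝ (n:ℤ)).eval x -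
          a * (Polynomial.Chebyshev.U ℝ ((n:ℤ)-1)).eval x) *
        ((2/Real.pi) * Real.sqrt (1-x^2) / ((1+a^2) - 2*a*x)))
      (fun x => (2/Real.pi) * ((Polynomial.Chebyshev.U ℝ (n:ℤ)).eval x * Real.sqrt (1-x^2))
        + a * (((Polynomial.Chebyshev.U ℝ ((n:ℤ)+1)).eval x -
            a * (Polynomial.Chebyshev.U ℝ (n:ℤ)).eval x) *
          ((2/Real.pi) * Real.sqrt (1-x^2) / ((1+a^2) - 2*a*x))))
      (Set.uIcc (-1:ℝ) 1) := by
    intro x hx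
    rw [Set.uIcc_of_le (by norm_num : (-1:ℝ) ≤ 1)] at hx
    have hD : (1+a^2) - 2*a*x ≠ 0 := by
      have hlb := denom_lb ha hx
      have hp := sq_abs_pos ha
      intro h; rw [h] at hlb; linarith
    have hrec : (Polynomial.Chebyshev.U ℝ ((n:ℤ)+1)).eval x
        = 2*x*(Polynomial.Chebyshev.U ℝ (n:ℤ)).eval x
          - (Polynomial.Chebyshev.U ℝ ((n:ℤ)-1)).eval x := by
      have h := Polynomial.Chebyshev.U_add_two ℝ ((n:ℤ)-1)
      have e1 : (n:ℤ)-1+2 = (n:ℤ)+1 := by ring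
      have e2 : (n:ℤ)-1+1 = (n:ℤ) := by ring
      rw [e1, e2] at h
      have := congrArg (Polynomial.eval x) h
      simpa using this
    simp only [hrec]
    have hD' : (1+a^2) - a*2*x ≠ 0 := by rwa [mul_comm 2 a] at hD
    field_simp
    ring
  have h1 : IntervalIntegrable
      (fun x => (2/Real.pi) * ((Polynomial.Chebyshev.U ℝ (n:ℤ)).eval x * Real.sqrt (1-x^2)))
      MeasureTheory.volume (-1) 1 :=
    (continuous_const.mul (((Polynomial.Chebyshev.U ℝ (n:ℤ)).continuous_aeval).mul
      (Real.continuous_sqrt.comp (continuous_const.sub (continuous_pow 2))))).intervalIntegrable _ _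
  have h2 : IntervalIntegrable
      (fun x => a * (((Polynomial.Chebyshev.U ℝ ((n:ℤ)+1)).eval x -
            a * (Polynomial.Chebyshev.U ℝ (n:ℤ)).eval x) *
          ((2/Real.pi) * Real.sqrt (1-x^2) / ((1+a^2) - 2*a*x))))
      MeasureTheory.volume (-1) 1 := by
    have := (integrable_integrand a ha ((n:ℤ)+1)).const_mul a
    simpa using this
  have hIq1 : Iq a (n+1) = ∫ x in (-1:ℝ)..1,
      ((Polynomial.Chebyshev.U ℝ ((n:ℤ)+1)).eval x -
          a * (Polynomial.Chebyshev.U ℝ (n:ℤ)).eval x) *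
        ((2/Real.pi) * Real.sqrt (1-x^2) / ((1+a^2) - 2*a*x)) := by
    unfold Iq
    push_cast [add_sub_cancel_right]
    rfl
  rw [hIq1]
  unfold Iq
  rw [intervalIntegral.integral_congr key, intervalIntegral.integral_add h1 h2,
    intervalIntegral.integral_const_mul, intervalIntegral.integral_const_mul,
    U_sqrt_integral n hn]
  ring

lemma Iq_bound (a : ℝ) (ha : |a| < 1) (n : ℕ) :
    |Iq a n| ≤ 2 * ((2/Real.pi) * (1+|a|) / (1-|a|)^2) := by
  have hpos := sq_abs_pos ha
  have hb : ∀ x ∈ Set.uIoc (-1:ℝ) 1,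
      ‖((Polynomial.Chebyshev.U ℝ (n:ℤ)).eval x -
          a * (Polynomial.Chebyshev.U ℝ ((n:ℤ)-1)).eval x) *
        ((2/Real.pi) * Real.sqrt (1-x^2) / ((1+a^2) - 2*a*x))‖
        ≤ (2/Real.pi) * (1+|a|) / (1-|a|)^2 := by
    intro x hx
    have hx' : x ∈ Set.Icc (-1:ℝ) 1 := by
      rw [Set.uIoc_of_le (by norm_num : (-1:ℝ) ≤ 1)] at hx
      exact ⟨le_of_lt hx.1, hx.2⟩
    have hD := denom_lb ha hx'
    have hDpos : 0 < (1+a^2) - 2*a*x := lt_of_lt_of_le hpos hD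
    have hU1 := U_sqrt_bound (n:ℤ) x hx'
    have hU2 := U_sqrt_bound ((n:ℤ)-1) x hx'
    rw [Real.norm_eq_abs]
    have e : ((Polynomial.Chebyshev.U ℝ (n:ℤ)).eval x -
          a * (Polynomial.Chebyshev.U ℝ ((n:ℤ)-1)).eval x) *
        ((2/Real.pi) * Real.sqrt (1-x^2) / ((1+a^2) - 2*a*x))
        = ((Polynomial.Chebyshev.U ℝ (n:ℤ)).eval x * Real.sqrt (1-x^2)
            - a * ((Polynomial.Chebyshev.U ℝ ((n:ℤ)-1)).eval x * Real.sqrt (1-x^2))) *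
          ((2/Real.pi) / ((1+a^2) - 2*a*x)) := by ring
    rw [e, abs_mul]
    have habs1 : |(Polynomial.Chebyshev.U ℝ (n:ℤ)).eval x * Real.sqrt (1-x^2)
            - a * ((Polynomial.Chebyshev.U ℝ ((n:ℤ)-1)).eval x * Real.sqrt (1-x^2))| ≤ 1 + |a| := by
      calc |(Polynomial.Chebyshev.U ℝ (n:ℤ)).eval x * Real.sqrt (1-x^2)
            - a * ((Polynomial.Chebyshev.U ℝ ((n:ℤ)-1)).eval x * Real.sqrt (1-x^2))|
          ≤ |(Polynomial.Chebyshev.U ℝ (n:ℤ)).eval x * Real.sqrt (1-x^2)|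
            + |a * ((Polynomial.Chebyshev.U ℝ ((n:ℤ)-1)).eval x * Real.sqrt (1-x^2))| :=
            abs_sub _ _
        _ ≤ 1 + |a| * 1 := by
            rw [abs_mul a]
            exact add_le_add hU1 (mul_le_mul_of_nonneg_left hU2 (abs_nonneg a))
        _ = 1 + |a| := by ring
    have habs2 : |(2/Real.pi) / ((1+a^2) - 2*a*x)| ≤ (2/Real.pi)/(1-|a|)^2 := by
      rw [abs_of_pos (by positivity)]
      exact div_le_div_of_nonneg_left (by positivity) hpos hD
    calc _ ≤ (1+|a|) * ((2/Real.pi)/(1-|a|)^2) :=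
          mul_le_mul habs1 habs2 (abs_nonneg _) (by positivity)
      _ = (2/Real.pi) * (1+|a|) / (1-|a|)^2 := by ring
  have h := intervalIntegral.norm_integral_le_of_norm_le_const hb
  rw [Real.norm_eq_abs] at h
  have : |(1:ℝ) - (-1)| = 2 := by norm_num
  rw [this] at h
  calc |Iq a n| ≤ (2/Real.pi) * (1+|a|) / (1-|a|)^2 * 2 := h
    _ = 2 * ((2/Real.pi) * (1+|a|) / (1-|a|)^2) := by ring

lemma Iq_iter (a : ℝ) (ha : |a| < 1) (m : ℕ) (hm : 1 ≤ m) (k : ℕ) :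
    Iq a m = a^k * Iq a (m+k) := by
  induction k with
  | zero => simp
  | succ k ih =>
    rw [ih, Iq_step a ha (m+k) (by omega), show m + (k+1) = m + k + 1 by omega]
    ring

theorem bigHermite_q_zero_orthogonal_to_density (a : ℝ) (ha : |a| < 1) (m : ℕ) (hm : 1 ≤ m) :
    ∫ x in (-1 : ℝ)..1,
        ((Polynomial.Chebyshev.U ℝ (m : ℤ)).eval x -
            a * (Polynomial.Chebyshev.U ℝ ((m : ℤ) - 1)).eval x) *
          ((2 / Real.pi) * Real.sqrt (1 - x ^ 2) / ((1 + a ^ 2) - 2 * a * x)) = 0 := by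
  have key : Iq a m = 0 := by
    have habs : ∀ k : ℕ, |Iq a m| ≤ |a|^k * (2 * ((2/Real.pi) * (1+|a|) / (1-|a|)^2)) := by
      intro k
      rw [Iq_iter a ha m hm k, abs_mul, abs_pow]
      exact mul_le_mul_of_nonneg_left (Iq_bound a ha (m+k)) (by positivity)
    have hlim : Filter.Tendsto
        (fun k : ℕ => |a|^k * (2 * ((2/Real.pi) * (1+|a|) / (1-|a|)^2)))
        Filter.atTop (nhds 0) := by
      have := (tendsto_pow_atTop_nhds_zero_of_lt_one (abs_nonneg a) ha).mul_const
        (2 * ((2/Real.pi) * (1+|a|) / (1-|a|)^2))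
      simpa using this
    have h0 : |Iq a m| ≤ 0 := ge_of_tendsto' hlim habs
    exact abs_eq_zero.mp (le_antisymm h0 (abs_nonneg _))
  exact key
end
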